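/- arXiv:2402.09261 — 2 statements merged into one kernel-verified Lean document; each statement's English description precedes it below -/
import Mathlib

section
/- Let X be a complex Banach space and let T ∈ L(X) be a right semi-Fredholm operator. Then T is a quasi-Fredholm operator. -/
noncomputable section

/-- The two-sided ideal `F₀(X)` of finite-rank operators in `L(X)`. -/
def finiteRankIdeal (X : Type*) [NormedAddCommGroup X] [NormedSpace ℂ X] :
    TwoSidedIdeal (X →L[ℂ] X) :=
  TwoSidedIdeal.mk'
    {F : X →L[ℂ] X | FiniteDimensional ℂ (LinearMap.range (F : X →ₗ[ℂ] X))}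
    (by
      show FiniteDimensional ℂ (LinearMap.range ((0 : X →L[ℂ] X) : X →ₗ[ℂ] X))
      rw [show LinearMap.range ((0 : X →L[ℂ] X) : X →ₗ[ℂ] X) = ⊥ by ext x; simp [eq_comm]]
      infer_instance)
    (by
      intro x y hx hy
      haveI : FiniteDimensional ℂ (LinearMap.range (x : X →ₗ[ℂ] X)) := hx
      haveI : FiniteDimensional ℂ (LinearMap.range (y : X →ₗ[ℂ] X)) := hy
      have hle : LinearMap.range ((x + y : X →L[ℂ] X) : X →ₗ[ℂ] X) ≤ LinearMap.range (x : X →ₗ[ℂ] X) ⊔ LinearMap.range (y : X →ₗ[ℂ] X) := by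
        rintro z ⟨w, rfl⟩
        exact Submodule.add_mem_sup (LinearMap.mem_range_self (x : X →ₗ[ℂ] X) w) (LinearMap.mem_range_self (y : X →ₗ[ℂ] X) w)
      exact Submodule.finiteDimensional_of_le hle)
    (by
      intro x hx
      haveI : FiniteDimensional ℂ (LinearMap.range (x : X →ₗ[ℂ] X)) := hx
      have hle : LinearMap.range ((-x : X →L[ℂ] X) : X →ₗ[ℂ] X) ≤ LinearMap.range (x : X →ₗ[ℂ] X) := by
        rintro z ⟨w, rfl⟩; exact ⟨-w, by simp⟩
      exact Submodule.finiteDimensional_of_le hle)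
    (by
      intro x y hy
      haveI : FiniteDimensional ℂ (LinearMap.range (y : X →ₗ[ℂ] X)) := hy
      haveI : FiniteDimensional ℂ (Submodule.map (x : X →ₗ[ℂ] X) (LinearMap.range (y : X →ₗ[ℂ] X))) :=
        Module.Finite.map _ _
      have hle : LinearMap.range ((x * y : X →L[ℂ] X) : X →ₗ[ℂ] X) ≤ Submodule.map (x : X →ₗ[ℂ] X) (LinearMap.range (y : X →ₗ[ℂ] X)) := by
        rintro z ⟨w, rfl⟩; exact ⟨y w, LinearMap.mem_range_self (y : X →ₗ[ℂ] X) w, rfl⟩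
      exact Submodule.finiteDimensional_of_le hle)
    (by
      intro x y hx
      haveI : FiniteDimensional ℂ (LinearMap.range (x : X →ₗ[ℂ] X)) := hx
      have hle : LinearMap.range ((x * y : X →L[ℂ] X) : X →ₗ[ℂ] X) ≤ LinearMap.range (x : X →ₗ[ℂ] X) := by
        rintro z ⟨w, rfl⟩; exact ⟨y w, rfl⟩
      exact Submodule.finiteDimensional_of_le hle)

/-- Restriction of a bounded operator to an invariant subspace, as a bounded
operator on that subspace. -/
def clmRestrict {X : Type*} [NormedAddCommGroup X] [NormedSpace ℂ X]
    (T : X →L[ℂ] X) (M : Submodule ℂ X) (h : ∀ x ∈ M, T x ∈ M) : M →L[ℂ] M where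
  toLinearMap := (T : X →ₗ[ℂ] X).restrict h
  cont := by
    show Continuous fun x : M => (⟨T x, h x x.2⟩ : M)
    exact Continuous.subtype_mk (T.continuous.comp continuous_subtype_val) _

/-- The set `Δ(T)` of stable iteration indices:
`Δ(T) = {n : ∀ m ≥ n, N(T) ∩ R(T^n) ⊆ N(T) ∩ R(T^m)}`. -/
def disSet {X : Type*} [NormedAddCommGroup X] [NormedSpace ℂ X] (T : X →L[ℂ] X) : Set ℕ :=
  {n | ∀ m, n ≤ m →
    (LinearMap.ker (T : X →ₗ[ℂ] X) ⊓ LinearMap.range ((T ^ n : X →L[ℂ] X) : X →ₗ[ℂ] X) : Submodule ℂ X) ≤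
      LinearMap.ker (T : X →ₗ[ℂ] X) ⊓ LinearMap.range ((T ^ m : X →L[ℂ] X) : X →ₗ[ℂ] X)}

/-- `T` is quasi-Fredholm of degree `d` : `dis(T) = d` (i.e. `d` is the least element of
`Δ(T)`), `N(T) ∩ R(T^d)` is a closed complemented subspace of `X`, and `R(T) + N(T^d)` is a
closed complemented subspace of `X`. -/
def IsQuasiFredholmOfDegree {X : Type*} [NormedAddCommGroup X] [NormedSpace ℂ X]
    (T : X →L[ℂ] X) (d : ℕ) : Prop :=
  IsLeast (disSet T) d ∧
    IsClosed ((LinearMap.ker (T : X →ₗ[ℂ] X) ⊓ LinearMap.range ((T ^ d : X →L[ℂ] X) : X →ₗ[ℂ] X) : Submodule ℂ X) : Set X) ∧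
    (LinearMap.ker (T : X →ₗ[ℂ] X) ⊓ LinearMap.range ((T ^ d : X →L[ℂ] X) : X →ₗ[ℂ] X)).ClosedComplemented ∧
    IsClosed ((LinearMap.range (T : X →ₗ[ℂ] X) ⊔ LinearMap.ker ((T ^ d : X →L[ℂ] X) : X →ₗ[ℂ] X) : Submodule ℂ X) : Set X) ∧
    (LinearMap.range (T : X →ₗ[ℂ] X) ⊔ LinearMap.ker ((T ^ d : X →L[ℂ] X) : X →ₗ[ℂ] X)).ClosedComplemented

/-- `T` is quasi-Fredholm if it is quasi-Fredholm of some degree `d`. -/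
def IsQuasiFredholm {X : Type*} [NormedAddCommGroup X] [NormedSpace ℂ X]
    (T : X →L[ℂ] X) : Prop :=
  ∃ d : ℕ, IsQuasiFredholmOfDegree T d

/-- Left semi-Fredholm: closed range, finite-dimensional kernel, and range complemented
(i.e. the range of a bounded projection). -/
def IsLeftSemiFredholm {Y : Type*} [NormedAddCommGroup Y] [NormedSpace ℂ Y]
    (S : Y →L[ℂ] Y) : Prop :=
  IsClosed ((LinearMap.range (S : Y →ₗ[ℂ] Y) : Submodule ℂ Y) : Set Y) ∧
    FiniteDimensional ℂ (LinearMap.ker (S : Y →ₗ[ℂ] Y)) ∧ (LinearMap.range (S : Y →ₗ[ℂ] Y)).ClosedComplemented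

/-- Right semi-Fredholm: closed range of finite codimension, and kernel complemented
(i.e. the range of a bounded projection). -/
def IsRightSemiFredholm {Y : Type*} [NormedAddCommGroup Y] [NormedSpace ℂ Y]
    (S : Y →L[ℂ] Y) : Prop :=
  IsClosed ((LinearMap.range (S : Y →ₗ[ℂ] Y) : Submodule ℂ Y) : Set Y) ∧
    FiniteDimensional ℂ (Y ⧸ LinearMap.range (S : Y →ₗ[ℂ] Y)) ∧ (LinearMap.ker (S : Y →ₗ[ℂ] Y)).ClosedComplemented

/-- Fredholm: closed range, finite-dimensional kernel, range of finite codimension. -/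
def IsFredholmOp {Y : Type*} [NormedAddCommGroup Y] [NormedSpace ℂ Y]
    (S : Y →L[ℂ] Y) : Prop :=
  IsClosed ((LinearMap.range (S : Y →ₗ[ℂ] Y) : Submodule ℂ Y) : Set Y) ∧
    FiniteDimensional ℂ (LinearMap.ker (S : Y →ₗ[ℂ] Y)) ∧ FiniteDimensional ℂ (Y ⧸ LinearMap.range (S : Y →ₗ[ℂ] Y))

/-- Regular operator: kernel and range are complemented (closed) subspaces. -/
def IsRegularOp {Y : Type*} [NormedAddCommGroup Y] [NormedSpace ℂ Y]
    (S : Y →L[ℂ] Y) : Prop :=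
  (LinearMap.ker (S : Y →ₗ[ℂ] Y)).ClosedComplemented ∧ (LinearMap.range (S : Y →ₗ[ℂ] Y)).ClosedComplemented

lemma range_pow_invariant {X : Type*} [NormedAddCommGroup X] [NormedSpace ℂ X]
    (T : X →L[ℂ] X) (n : ℕ) :
    ∀ x ∈ LinearMap.range ((T ^ n : X →L[ℂ] X) : X →ₗ[ℂ] X), T x ∈ LinearMap.range ((T ^ n : X →L[ℂ] X) : X →ₗ[ℂ] X) := by
  rintro x ⟨y, rfl⟩
  exact ⟨T y, by
    show (T ^ n) (T y) = T ((T ^ n) y)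
    rw [← ContinuousLinearMap.mul_apply, ← ContinuousLinearMap.mul_apply, ← pow_succ,
      ← pow_succ']⟩

/-- B-Fredholm: for some `n`, `R(T^n)` is closed and the restriction of `T` to `R(T^n)`,
viewed as an operator from `R(T^n)` to `R(T^n)`, is a Fredholm operator. -/
def IsBFredholm {X : Type*} [NormedAddCommGroup X] [NormedSpace ℂ X]
    (T : X →L[ℂ] X) : Prop :=
  ∃ n : ℕ, IsClosed ((LinearMap.range ((T ^ n : X →L[ℂ] X) : X →ₗ[ℂ] X) : Submodule ℂ X) : Set X) ∧
    IsFredholmOp (clmRestrict T (LinearMap.range ((T ^ n : X →L[ℂ] X) : X →ₗ[ℂ] X)) (range_pow_invariant T n))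

/-- Left Drazin invertible element of a unital ring: there is an idempotent `p`
commuting with `a` such that `a * p` is nilpotent and `a + p` has a left inverse
commuting with `p`. -/
def IsLeftDrazinInvertible {A : Type*} [Ring A] (a : A) : Prop :=
  ∃ p : A, IsIdempotentElem p ∧ a * p = p * a ∧ IsNilpotent (a * p) ∧
    ∃ b : A, b * (a + p) = 1 ∧ b * p = p * b

/-- Right Drazin invertible element of a unital ring: there is an idempotent `p`
commuting with `a` such that `a * p` is nilpotent and `a + p` has a right inverse
commuting with `p`. -/
def IsRightDrazinInvertible {A : Type*} [Ring A] (a : A) : Prop :=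
  ∃ p : A, IsIdempotentElem p ∧ a * p = p * a ∧ IsNilpotent (a * p) ∧
    ∃ b : A, (a + p) * b = 1 ∧ b * p = p * b

/-- Drazin invertible element of a unital ring: there is an idempotent `p`
commuting with `a` such that `a * p` is nilpotent and `a + p` is invertible. -/
def IsDrazinInvertible {A : Type*} [Ring A] (a : A) : Prop :=
  ∃ p : A, IsIdempotentElem p ∧ a * p = p * a ∧ IsNilpotent (a * p) ∧ IsUnit (a + p)

end


noncomputable section QFHelpers

open Submodule LinearMap Module

variable {E : Type*} [NormedAddCommGroup E] [NormedSpace ℂ E]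

/-- A submodule containing a closed submodule of finite codimension is closed. -/
private lemma qf_isClosed_of_le {p q : Submodule ℂ E} (hpq : p ≤ q)
    (hp : IsClosed (p : Set E)) (hfd : FiniteDimensional ℂ (E ⧸ p)) :
    IsClosed (q : Set E) := by
  haveI : IsClosed (p : Set E) := hp
  haveI := hfd
  have hcl : IsClosed ((Submodule.map p.mkQ q : Submodule ℂ (E ⧸ p)) : Set (E ⧸ p)) :=
    Submodule.closed_of_finiteDimensional _
  have h1 : Submodule.comap p.mkQ (Submodule.map p.mkQ q) = q := by
    rw [Submodule.comap_map_mkQ, sup_eq_right.mpr hpq]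
  have h2 : (q : Set E) = p.mkQ ⁻¹' ((Submodule.map p.mkQ q : Submodule ℂ (E ⧸ p)) : Set (E ⧸ p)) := by
    conv_lhs => rw [← h1]
    rfl
  rw [h2]
  exact hcl.preimage p.isOpenQuotientMap_mkQ.continuous

/-- The image of a closed subspace containing the kernel, under an operator with
closed range, is closed. -/
private lemma qf_isClosed_map [CompleteSpace E] (f : E →L[ℂ] E)
    (hr : IsClosed ((LinearMap.range (f : E →ₗ[ℂ] E) : Submodule ℂ E) : Set E))
    {W : Submodule ℂ E} (hW : IsClosed (W : Set E)) (hker : LinearMap.ker (f : E →ₗ[ℂ] E) ≤ W) :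
    IsClosed ((Submodule.map (f : E →ₗ[ℂ] E) W : Submodule ℂ E) : Set E) := by
  set K : Submodule ℂ E := LinearMap.ker (f : E →ₗ[ℂ] E) with hK
  haveI hKc : IsClosed (K : Set E) := ContinuousLinearMap.isClosed_ker f
  have hle : K ≤ LinearMap.ker (f : E →ₗ[ℂ] E) := fun x hx => hx
  have hge : LinearMap.ker (f : E →ₗ[ℂ] E) ≤ K := fun x hx => hx
  let f₀ : (E ⧸ K) →ₗ[ℂ] E := K.liftQ (f : E →ₗ[ℂ] E) hle
  have hf₀ : ∀ x : E, f₀ (K.mkQ x) = f x := fun x => rfl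
  have hcont : Continuous f₀ := by
    rw [K.isOpenQuotientMap_mkQ.isQuotientMap.continuous_iff]
    have : (⇑f₀ ∘ ⇑K.mkQ) = ⇑f := funext fun x => hf₀ x
    rw [this]; exact f.continuous
  let fbar : (E ⧸ K) →L[ℂ] E := ⟨f₀, hcont⟩
  have hinj : Function.Injective fbar := by
    show Function.Injective f₀
    exact LinearMap.ker_eq_bot.mp (Submodule.ker_liftQ_eq_bot _ _ _ hge)
  have hrange : LinearMap.range (fbar : (E ⧸ K) →ₗ[ℂ] E) = LinearMap.range (f : E →ₗ[ℂ] E) := by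
    show LinearMap.range f₀ = LinearMap.range (f : E →ₗ[ℂ] E)
    exact Submodule.range_liftQ _ _ _
  have hclorange : IsClosed ((LinearMap.range (fbar : (E ⧸ K) →ₗ[ℂ] E) : Submodule ℂ E) : Set E) := by
    rw [hrange]; exact hr
  have hclo : IsClosed (Set.range ⇑fbar) := by
    have h1 : Set.range ⇑fbar = ((LinearMap.range (fbar : (E ⧸ K) →ₗ[ℂ] E) : Submodule ℂ E) : Set E) := by
      ext z; simp [LinearMap.mem_range, Set.mem_range]
    rw [h1]; exact hclorange
  let e := fbar.equivRange hinj hclo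
  have hval : ∀ u : E ⧸ K, (e u : E) = fbar u := fun u => rfl
  have key : ((Submodule.map (f : E →ₗ[ℂ] E) W : Submodule ℂ E) : Set E)
      = Subtype.val '' (⇑e '' (⇑K.mkQ '' (W : Set E))) := by
    ext z
    simp only [SetLike.mem_coe, Submodule.mem_map, Set.mem_image]
    constructor
    · rintro ⟨w, hw, rfl⟩
      exact ⟨e (K.mkQ w), ⟨K.mkQ w, ⟨w, hw, rfl⟩, rfl⟩, rfl⟩
    · rintro ⟨y, ⟨u, ⟨w, hw, rfl⟩, rfl⟩, rfl⟩
      exact ⟨w, hw, rfl⟩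
  have h1 : IsClosed (⇑K.mkQ '' (W : Set E)) := by
    rw [← K.isOpenQuotientMap_mkQ.isQuotientMap.isClosed_preimage]
    have h2 : ⇑K.mkQ ⁻¹' (⇑K.mkQ '' (W : Set E)) = (W : Set E) := by
      apply Set.Subset.antisymm
      · rintro x ⟨w, hw, hwx⟩
        have hxw : x - w ∈ K := (Submodule.Quotient.eq K).mp hwx.symm
        have := W.add_mem (hker hxw) hw
        simpa using this
      · intro x hx; exact ⟨x, hx, rfl⟩
    rw [h2]; exact hW
  have h2 : IsClosed (⇑e '' (⇑K.mkQ '' (W : Set E))) :=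
    e.toHomeomorph.isClosedMap _ h1
  have h3 : IsClosed (Subtype.val '' (⇑e '' (⇑K.mkQ '' (W : Set E)))) :=
    hclorange.isClosedEmbedding_subtypeVal.isClosedMap _ h2
  rw [key]; exact h3

private lemma qf_map_range_pow (T : E →L[ℂ] E) (n : ℕ) :
    Submodule.map (T : E →ₗ[ℂ] E) (LinearMap.range ((T ^ n : E →L[ℂ] E) : E →ₗ[ℂ] E)) = LinearMap.range ((T ^ (n + 1) : E →L[ℂ] E) : E →ₗ[ℂ] E) := by
  ext x
  simp only [Submodule.mem_map, LinearMap.mem_range]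
  constructor
  · rintro ⟨y, ⟨z, rfl⟩, rfl⟩
    exact ⟨z, by rw [pow_succ']; rfl⟩
  · rintro ⟨z, rfl⟩
    exact ⟨(T ^ n) z, ⟨z, rfl⟩, by rw [pow_succ']; rfl⟩

private lemma qf_map_pow_rangeT (T : E →L[ℂ] E) (n : ℕ) :
    Submodule.map ((T ^ n : E →L[ℂ] E) : E →ₗ[ℂ] E) (LinearMap.range (T : E →ₗ[ℂ] E))
      = LinearMap.range ((T ^ (n + 1) : E →L[ℂ] E) : E →ₗ[ℂ] E) := by
  ext x
  simp only [Submodule.mem_map, LinearMap.mem_range]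
  constructor
  · rintro ⟨y, ⟨z, rfl⟩, rfl⟩
    exact ⟨z, by rw [pow_succ]; rfl⟩
  · rintro ⟨z, rfl⟩
    exact ⟨T z, ⟨z, rfl⟩, by rw [pow_succ]; rfl⟩

/-- If `T` has finite-codimensional range, so do all its powers. -/
private lemma qf_findim_quotient (T : E →L[ℂ] E)
    (h : FiniteDimensional ℂ (E ⧸ (LinearMap.range (T : E →ₗ[ℂ] E) : Submodule ℂ E))) (n : ℕ) :
    FiniteDimensional ℂ (E ⧸ (LinearMap.range ((T ^ n : E →L[ℂ] E) : E →ₗ[ℂ] E) : Submodule ℂ E)) := by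
  obtain ⟨F, hFfd, hFsup⟩ :
      ∃ F : Submodule ℂ E, FiniteDimensional ℂ F ∧ LinearMap.range (T : E →ₗ[ℂ] E) ⊔ F = ⊤ := by
    obtain ⟨F, hc⟩ := Submodule.exists_isCompl (LinearMap.range (T : E →ₗ[ℂ] E) : Submodule ℂ E)
    exact ⟨F, (Submodule.quotientEquivOfIsCompl _ _ hc).finiteDimensional,
      codisjoint_iff.mp hc.codisjoint⟩
  have main : ∀ n, ∃ G : Submodule ℂ E,
      FiniteDimensional ℂ G ∧ LinearMap.range ((T ^ n : E →L[ℂ] E) : E →ₗ[ℂ] E) ⊔ G = ⊤ := by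
    intro n
    induction n with
    | zero =>
      refine ⟨⊥, inferInstance, ?_⟩
      rw [sup_bot_eq]
      ext x
      simp only [LinearMap.mem_range, Submodule.mem_top, iff_true, pow_zero]
      exact ⟨x, rfl⟩
    | succ n ih =>
      obtain ⟨G, hGfd, hG⟩ := ih
      have hstep : LinearMap.range ((T ^ n : E →L[ℂ] E) : E →ₗ[ℂ] E) = LinearMap.range ((T ^ (n + 1) : E →L[ℂ] E) : E →ₗ[ℂ] E)
          ⊔ Submodule.map ((T ^ n : E →L[ℂ] E) : E →ₗ[ℂ] E) F := by
        have hr0 : (LinearMap.range ((T ^ n : E →L[ℂ] E) : E →ₗ[ℂ] E) : Submodule ℂ E)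
            = LinearMap.range ((T ^ n : E →L[ℂ] E) : E →ₗ[ℂ] E) := rfl
        rw [hr0, ← Submodule.map_top, ← hFsup, Submodule.map_sup, qf_map_pow_rangeT]
      refine ⟨Submodule.map ((T ^ n : E →L[ℂ] E) : E →ₗ[ℂ] E) F ⊔ G, ?_, ?_⟩
      · haveI := hFfd
        haveI := hGfd
        haveI : FiniteDimensional ℂ (Submodule.map ((T ^ n : E →L[ℂ] E) : E →ₗ[ℂ] E) F) :=
          Module.Finite.map _ _
        infer_instance
      · rw [← sup_assoc, ← hstep, hG]
  obtain ⟨G, hGfd, hG⟩ := main n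
  haveI := hGfd
  apply Module.Finite.of_surjective ((LinearMap.range ((T ^ n : E →L[ℂ] E) : E →ₗ[ℂ] E)).mkQ.comp G.subtype)
  intro y
  obtain ⟨x, rfl⟩ := Submodule.mkQ_surjective _ y
  have hx : x ∈ LinearMap.range ((T ^ n : E →L[ℂ] E) : E →ₗ[ℂ] E) ⊔ G := by rw [hG]; exact Submodule.mem_top
  obtain ⟨r, hr, g, hg, rfl⟩ := Submodule.mem_sup.mp hx
  refine ⟨⟨g, hg⟩, ?_⟩
  have h0 : (LinearMap.range ((T ^ n : E →L[ℂ] E) : E →ₗ[ℂ] E)).mkQ r = 0 := by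
    rw [Submodule.mkQ_apply, Submodule.Quotient.mk_eq_zero]; exact hr
  rw [LinearMap.comp_apply]
  rw [map_add, h0, zero_add]
  rfl

/-- A closed subspace of finite codimension relative to a complemented subspace is
complemented. -/
private lemma qf_closedComplemented_inf [CompleteSpace E] {p q : Submodule ℂ E}
    (hp : p.ClosedComplemented) (hpq_cl : IsClosed ((p ⊓ q : Submodule ℂ E) : Set E))
    (hfd : FiniteDimensional ℂ (E ⧸ q)) :
    (p ⊓ q : Submodule ℂ E).ClosedComplemented := by
  have hpcl : IsClosed (p : Set E) := hp.isClosed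
  obtain ⟨P, hP⟩ := hp
  set M' : Submodule ℂ p := Submodule.comap p.subtype (p ⊓ q) with hM'def
  haveI : FiniteDimensional ℂ (E ⧸ q) := hfd
  have hkerφ : LinearMap.ker (q.mkQ ∘ₗ p.subtype) = M' := by
    rw [LinearMap.ker_comp, Submodule.ker_mkQ]
    ext x
    simp only [hM'def, Submodule.mem_comap, Submodule.subtype_apply, Submodule.mem_inf]
    exact ⟨fun hx => ⟨x.2, hx⟩, fun hx => hx.2⟩
  haveI : FiniteDimensional ℂ (↥p ⧸ M') :=
    FiniteDimensional.of_injective (M'.liftQ (q.mkQ ∘ₗ p.subtype) hkerφ.ge)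
      (LinearMap.ker_eq_bot.mp (Submodule.ker_liftQ_eq_bot _ _ _ hkerφ.le))
  have hM'cl : IsClosed (M' : Set p) := by
    have h0 : (M' : Set p) = (p.subtype : ↥p → E) ⁻¹' ((p ⊓ q : Submodule ℂ E) : Set E) := rfl
    rw [h0]
    exact hpq_cl.preimage continuous_subtype_val
  haveI : CompleteSpace p := hpcl.completeSpace_coe
  obtain ⟨g, hg⟩ := Submodule.ClosedComplemented.of_quotient_finiteDimensional hM'cl
  refine ⟨ContinuousLinearMap.codRestrict
    (p.subtypeL.comp ((M'.subtypeL).comp (g.comp P))) (p ⊓ q)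
    (fun x => Submodule.mem_comap.mp (g (P x)).2), fun x => ?_⟩
  apply Subtype.ext
  have hx1 : (x : E) ∈ p := x.2.1
  have hPx : P (x : E) = ⟨(x : E), hx1⟩ := hP ⟨(x : E), hx1⟩
  have hmem' : (⟨(x : E), hx1⟩ : p) ∈ M' := Submodule.mem_comap.mpr x.2
  have hgx : g ((⟨⟨(x : E), hx1⟩, hmem'⟩ : M') : ↥p) = ⟨⟨(x : E), hx1⟩, hmem'⟩ :=
    hg ⟨⟨(x : E), hx1⟩, hmem'⟩
  show ((p.subtypeL.comp ((M'.subtypeL).comp (g.comp P))) (x : E) : E) = (x : E)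
  rw [ContinuousLinearMap.comp_apply, ContinuousLinearMap.comp_apply,
    ContinuousLinearMap.comp_apply, hPx]
  rw [show ((⟨(x : E), hx1⟩ : p) : ↥p) = ((⟨⟨(x : E), hx1⟩, hmem'⟩ : M') : ↥p) from rfl, hgx]
  rfl

end QFHelpers

/-- Every right semi-Fredholm operator is quasi-Fredholm. -/
theorem rightSemiFredholm_isQuasiFredholm
    (X : Type*) [NormedAddCommGroup X] [NormedSpace ℂ X] [CompleteSpace X]
    (T : X →L[ℂ] X) (hT : IsRightSemiFredholm T) :
    IsQuasiFredholm T := by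
  classical
  obtain ⟨hclosed, hfd, hkercompl⟩ := hT
  have hfdn : ∀ n, FiniteDimensional ℂ (X ⧸ (LinearMap.range ((T ^ n : X →L[ℂ] X) : X →ₗ[ℂ] X) : Submodule ℂ X)) :=
    qf_findim_quotient T hfd
  -- closedness of ranges of powers
  have hcln : ∀ n, IsClosed ((LinearMap.range ((T ^ n : X →L[ℂ] X) : X →ₗ[ℂ] X) : Submodule ℂ X) : Set X) := by
    intro n
    induction n with
    | zero =>
      have htop : (LinearMap.range ((T ^ 0 : X →L[ℂ] X) : X →ₗ[ℂ] X) : Submodule ℂ X) = ⊤ := by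
        ext x
        simp only [Submodule.mem_top, iff_true, LinearMap.mem_range, pow_zero]
        exact ⟨x, rfl⟩
      rw [htop, Submodule.top_coe]
      exact isClosed_univ
    | succ n ih =>
      have hW : IsClosed ((LinearMap.range ((T ^ n : X →L[ℂ] X) : X →ₗ[ℂ] X) ⊔ LinearMap.ker (T : X →ₗ[ℂ] X) : Submodule ℂ X) : Set X) :=
        qf_isClosed_of_le le_sup_left ih (hfdn n)
      have hmap : Submodule.map (T : X →ₗ[ℂ] X) (LinearMap.range ((T ^ n : X →L[ℂ] X) : X →ₗ[ℂ] X) ⊔ LinearMap.ker (T : X →ₗ[ℂ] X))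
          = LinearMap.range ((T ^ (n + 1) : X →L[ℂ] X) : X →ₗ[ℂ] X) := by
        rw [Submodule.map_sup, qf_map_range_pow]
        have hker0 : Submodule.map (T : X →ₗ[ℂ] X) (LinearMap.ker (T : X →ₗ[ℂ] X) : Submodule ℂ X) = ⊥ := by
          rw [Submodule.eq_bot_iff]
          rintro x ⟨y, hy, rfl⟩
          exact hy
        rw [hker0, sup_bot_eq]
      have h := qf_isClosed_map T hclosed hW le_sup_right
      rwa [hmap] at h
  -- the codimension of `R(T^{n+1})` inside `R(T^n)`
  let c : ℕ → ℕ := fun n =>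
    Module.finrank ℂ
      (Submodule.map (LinearMap.range ((T ^ (n + 1) : X →L[ℂ] X) : X →ₗ[ℂ] X)).mkQ (LinearMap.range ((T ^ n : X →L[ℂ] X) : X →ₗ[ℂ] X)))
  have hstep : ∀ n, c (n + 1) ≤ c n ∧
      (¬ ((LinearMap.ker (T : X →ₗ[ℂ] X) ⊓ LinearMap.range ((T ^ n : X →L[ℂ] X) : X →ₗ[ℂ] X) : Submodule ℂ X)
          ≤ LinearMap.range ((T ^ (n + 1) : X →L[ℂ] X) : X →ₗ[ℂ] X)) → c (n + 1) < c n) := by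
    intro n
    haveI := hfdn (n + 1)
    haveI := hfdn (n + 2)
    have hTR : (LinearMap.range ((T ^ (n + 1) : X →L[ℂ] X) : X →ₗ[ℂ] X) : Submodule ℂ X) ≤
        Submodule.comap (T : X →ₗ[ℂ] X) (LinearMap.range ((T ^ (n + 2) : X →L[ℂ] X) : X →ₗ[ℂ] X)) := by
      rintro x ⟨y, rfl⟩
      exact ⟨y, by rw [pow_succ']; rfl⟩
    set Tbar := Submodule.mapQ (LinearMap.range ((T ^ (n + 1) : X →L[ℂ] X) : X →ₗ[ℂ] X))
      (LinearMap.range ((T ^ (n + 2) : X →L[ℂ] X) : X →ₗ[ℂ] X)) (T : X →ₗ[ℂ] X) hTR with hTbar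
    set A : Submodule ℂ (X ⧸ (LinearMap.range ((T ^ (n + 1) : X →L[ℂ] X) : X →ₗ[ℂ] X) : Submodule ℂ X)) :=
      Submodule.map (LinearMap.range ((T ^ (n + 1) : X →L[ℂ] X) : X →ₗ[ℂ] X)).mkQ (LinearMap.range ((T ^ n : X →L[ℂ] X) : X →ₗ[ℂ] X)) with hA
    set g := Tbar.domRestrict A with hgdef
    have hrange_g : LinearMap.range g
        = Submodule.map (LinearMap.range ((T ^ (n + 2) : X →L[ℂ] X) : X →ₗ[ℂ] X)).mkQ (LinearMap.range ((T ^ (n + 1) : X →L[ℂ] X) : X →ₗ[ℂ] X)) := by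
      rw [hgdef, LinearMap.range_domRestrict, hA, ← Submodule.map_comp, Submodule.mapQ_mkQ,
        Submodule.map_comp, qf_map_range_pow]
    have hrn := LinearMap.finrank_range_add_finrank_ker g
    have hc1 : c (n + 1) = Module.finrank ℂ (LinearMap.range g) := by rw [hrange_g]
    have hc0 : c n = Module.finrank ℂ A := rfl
    constructor
    · rw [hc1, hc0]; omega
    · intro hne
      obtain ⟨x, hx, hxnot⟩ := SetLike.not_le_iff_exists.mp hne
      have hx1 : T x = 0 := hx.1
      have hξmem : (LinearMap.range ((T ^ (n + 1) : X →L[ℂ] X) : X →ₗ[ℂ] X)).mkQ x ∈ A := ⟨x, hx.2, rfl⟩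
      have hξne : (⟨(LinearMap.range ((T ^ (n + 1) : X →L[ℂ] X) : X →ₗ[ℂ] X)).mkQ x, hξmem⟩ : A) ≠ 0 := by
        intro h0
        apply hxnot
        have h1 : (LinearMap.range ((T ^ (n + 1) : X →L[ℂ] X) : X →ₗ[ℂ] X)).mkQ x = 0 := congrArg Subtype.val h0
        rwa [Submodule.mkQ_apply, Submodule.Quotient.mk_eq_zero] at h1
      have hkermem : (⟨(LinearMap.range ((T ^ (n + 1) : X →L[ℂ] X) : X →ₗ[ℂ] X)).mkQ x, hξmem⟩ : A) ∈ LinearMap.ker g := by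
        rw [LinearMap.mem_ker, hgdef, LinearMap.domRestrict_apply]
        show Tbar ((LinearMap.range ((T ^ (n + 1) : X →L[ℂ] X) : X →ₗ[ℂ] X)).mkQ x) = 0
        rw [hTbar, Submodule.mkQ_apply, Submodule.mapQ_apply]
        rw [show (T : X →ₗ[ℂ] X) x = 0 from hx1]
        simp
      have hkerpos : 0 < Module.finrank ℂ (LinearMap.ker g) := by
        haveI : FiniteDimensional ℂ A := inferInstance
        haveI : FiniteDimensional ℂ (LinearMap.ker g) := inferInstance
        apply Nat.pos_of_ne_zero
        intro h0
        rw [Submodule.finrank_eq_zero] at h0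
        rw [h0, Submodule.mem_bot] at hkermem
        exact hξne hkermem
      rw [hc1, hc0]; omega
  have hAnti : Antitone c := antitone_nat_of_succ_le fun n => (hstep n).1
  obtain ⟨dm, hdm⟩ : ∃ dd : ℕ, ∀ n, c dd ≤ c n := by
    have hne : (Set.range c).Nonempty := ⟨c 0, 0, rfl⟩
    obtain ⟨dd, hdd⟩ := Nat.sInf_mem hne
    exact ⟨dd, fun n => by rw [hdd]; exact Nat.sInf_le ⟨n, rfl⟩⟩
  have hstab : ∀ n, dm ≤ n →
      (LinearMap.ker (T : X →ₗ[ℂ] X) ⊓ LinearMap.range ((T ^ n : X →L[ℂ] X) : X →ₗ[ℂ] X) : Submodule ℂ X)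
        ≤ LinearMap.range ((T ^ (n + 1) : X →L[ℂ] X) : X →ₗ[ℂ] X) := by
    intro n hn
    by_contra hcon
    have h1 : c (n + 1) < c n := (hstep n).2 hcon
    have h2 : c n ≤ c dm := hAnti hn
    have h3 : c dm ≤ c (n + 1) := hdm (n + 1)
    omega
  have hmem : ∀ n, dm ≤ n → n ∈ disSet T := by
    intro n hn m hm
    refine Nat.le_induction ?_ ?_ m hm
    · exact le_rfl
    · intro k hk ih
      refine ih.trans (le_inf inf_le_left ?_)
      exact hstab k (hn.trans hk)
  have hDne : (disSet T).Nonempty := ⟨dm, hmem dm le_rfl⟩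
  set d := sInf (disSet T) with hd
  have hleast : IsLeast (disSet T) d := ⟨Nat.sInf_mem hDne, fun n hn => Nat.sInf_le hn⟩
  have ha : IsClosed ((LinearMap.ker (T : X →ₗ[ℂ] X) ⊓ LinearMap.range ((T ^ d : X →L[ℂ] X) : X →ₗ[ℂ] X) : Submodule ℂ X) : Set X) := by
    rw [Submodule.coe_inf]
    exact (ContinuousLinearMap.isClosed_ker T).inter (hcln d)
  have hb : (LinearMap.ker (T : X →ₗ[ℂ] X) ⊓ LinearMap.range ((T ^ d : X →L[ℂ] X) : X →ₗ[ℂ] X) : Submodule ℂ X).ClosedComplemented :=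
    qf_closedComplemented_inf hkercompl ha (hfdn d)
  have hc' : IsClosed ((LinearMap.range (T : X →ₗ[ℂ] X) ⊔ LinearMap.ker ((T ^ d : X →L[ℂ] X) : X →ₗ[ℂ] X) : Submodule ℂ X) : Set X) :=
    qf_isClosed_of_le le_sup_left hclosed hfd
  have hd' : (LinearMap.range (T : X →ₗ[ℂ] X) ⊔ LinearMap.ker ((T ^ d : X →L[ℂ] X) : X →ₗ[ℂ] X) : Submodule ℂ X).ClosedComplemented := by
    have hle : (LinearMap.range (T : X →ₗ[ℂ] X) : Submodule ℂ X) ≤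
        Submodule.comap (LinearMap.id : X →ₗ[ℂ] X)
          (LinearMap.range (T : X →ₗ[ℂ] X) ⊔ LinearMap.ker ((T ^ d : X →L[ℂ] X) : X →ₗ[ℂ] X)) := by
      intro x hx
      exact Submodule.mem_sup_left hx
    have hsurj : Function.Surjective (Submodule.mapQ (LinearMap.range (T : X →ₗ[ℂ] X))
        (LinearMap.range (T : X →ₗ[ℂ] X) ⊔ LinearMap.ker ((T ^ d : X →L[ℂ] X) : X →ₗ[ℂ] X)) (LinearMap.id : X →ₗ[ℂ] X) hle) := by
      intro y
      obtain ⟨x, rfl⟩ := Submodule.mkQ_surjective _ y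
      refine ⟨(LinearMap.range (T : X →ₗ[ℂ] X)).mkQ x, ?_⟩
      rw [Submodule.mkQ_apply, Submodule.mkQ_apply, Submodule.mapQ_apply]
      rfl
    haveI := hfd
    haveI : FiniteDimensional ℂ
        (X ⧸ (LinearMap.range (T : X →ₗ[ℂ] X) ⊔ LinearMap.ker ((T ^ d : X →L[ℂ] X) : X →ₗ[ℂ] X) : Submodule ℂ X)) :=
      Module.Finite.of_surjective _ hsurj
    exact Submodule.ClosedComplemented.of_quotient_finiteDimensional hc'
  exact ⟨d, hleast, ha, hb, hc', hd'⟩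
end

section
/- Let X be a complex Banach space and let T ∈ L(X). Then T is a B-Fredholm operator if and only if π(T) is both left Drazin invertible and right Drazin invertible in the algebra C₀(X) = L(X)/F₀(X). -/
noncomputable section


section RingLemmas

variable {A : Type*} [Ring A]

private lemma aux_pow_left {a u : A} {k : ℕ} (hu : u * a ^ (k + 1) = a ^ k) :
    ∀ m : ℕ, u ^ m * a ^ (k + m) = a ^ k := by
  intro m
  induction m with
  | zero => simp
  | succ m ih =>
    have h1 : a ^ (k + (m + 1)) = a ^ (k + 1) * a ^ m := by
      rw [← pow_add]; congr 1; omega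
    calc u ^ (m + 1) * a ^ (k + (m + 1))
        = u ^ m * ((u * a ^ (k + 1)) * a ^ m) := by
          rw [h1, pow_succ u m, mul_assoc, ← mul_assoc u]
      _ = u ^ m * a ^ (k + m) := by rw [hu, ← pow_add]
      _ = a ^ k := ih

private lemma aux_pow_right {a v : A} {k : ℕ} (hv : a ^ (k + 1) * v = a ^ k) :
    ∀ m : ℕ, a ^ (k + m) * v ^ m = a ^ k := by
  intro m
  induction m with
  | zero => simp
  | succ m ih =>
    have h1 : a ^ (k + (m + 1)) = a ^ m * a ^ (k + 1) := by
      rw [← pow_add]; congr 1; omega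
    calc a ^ (k + (m + 1)) * v ^ (m + 1)
        = a ^ m * ((a ^ (k + 1) * v) * v ^ m) := by
          rw [h1, pow_succ' v m, mul_assoc, ← mul_assoc (a ^ (k + 1))]
      _ = a ^ (k + m) * v ^ m := by rw [hv, ← mul_assoc, ← pow_add, Nat.add_comm m k]
      _ = a ^ k := ih

/-- Drazin's theorem: one-sided π-regularity on both sides gives a Drazin inverse. -/
lemma drazin_core (a u v : A) (k : ℕ) (hu : u * a ^ (k + 1) = a ^ k)
    (hv : a ^ (k + 1) * v = a ^ k) :
    ∃ b : A, a * b = b * a ∧ b * a * b = b ∧ a ^ (k + 1) * b = a ^ k := by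
  have hU := aux_pow_left hu
  have hV := aux_pow_right hv
  set b := a ^ k * v ^ (k + 1) with hbdef
  have hb' : b = u ^ (k + 1) * a ^ k := by
    calc b = (u ^ (k + 1) * a ^ (k + (k + 1))) * v ^ (k + 1) := by rw [hU (k + 1)]
      _ = u ^ (k + 1) * (a ^ (k + (k + 1)) * v ^ (k + 1)) := by rw [mul_assoc]
      _ = u ^ (k + 1) * a ^ k := by rw [hV (k + 1)]
  have hmid : a ^ k * v ^ k = u ^ k * a ^ k := by
    calc a ^ k * v ^ k = (u ^ k * a ^ (k + k)) * v ^ k := by rw [hU k]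
      _ = u ^ k * (a ^ (k + k) * v ^ k) := by rw [mul_assoc]
      _ = u ^ k * a ^ k := by rw [hV k]
  have hab : a * b = a ^ k * v ^ k := by
    calc a * b = (a * a ^ k) * v ^ (k + 1) := by rw [hbdef, ← mul_assoc]
      _ = a ^ (k + 1) * (v * v ^ k) := by rw [← pow_succ', pow_succ' v]
      _ = (a ^ (k + 1) * v) * v ^ k := by rw [mul_assoc]
      _ = a ^ k * v ^ k := by rw [hv]
  have hba : b * a = u ^ k * a ^ k := by
    calc b * a = u ^ (k + 1) * (a ^ k * a) := by rw [hb', mul_assoc]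
      _ = (u ^ k * u) * a ^ (k + 1) := by rw [← pow_succ, pow_succ u]
      _ = u ^ k * (u * a ^ (k + 1)) := by rw [mul_assoc]
      _ = u ^ k * a ^ k := by rw [hu]
  have hcomm : a * b = b * a := by rw [hab, hba, hmid]
  refine ⟨b, hcomm, ?_, ?_⟩
  · calc b * a * b = b * (a * b) := by rw [mul_assoc]
      _ = (u ^ (k + 1) * a ^ k) * (a ^ k * v ^ k) := by rw [hab, hb']
      _ = u ^ (k + 1) * (a ^ (k + k) * v ^ k) := by
          rw [mul_assoc, ← mul_assoc (a ^ k), ← pow_add]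
      _ = u ^ (k + 1) * a ^ k := by rw [hV k]
      _ = b := hb'.symm
  · calc a ^ (k + 1) * b = a ^ (k + 1) * a ^ k * v ^ (k + 1) := by rw [hbdef, mul_assoc]
      _ = a ^ (k + (k + 1)) * v ^ (k + 1) := by rw [← pow_add]; congr 2; omega
      _ = a ^ k := hV (k + 1)

end RingLemmas
section RingLemmas2

variable {A : Type*} [Ring A]

/-- From a Drazin-inverse-like triple, construct left and right Drazin invertibility. -/
lemma drazin_left_right (a b : A) (k : ℕ) (h1 : a * b = b * a) (h2 : b * a * b = b)
    (h3 : a ^ (k + 1) * b = a ^ k) :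
    IsLeftDrazinInvertible a ∧ IsRightDrazinInvertible a := by
  set p := 1 - a * b with hpdef
  have hab_idem : IsIdempotentElem (a * b) := by
    show a * b * (a * b) = a * b
    calc a * b * (a * b) = a * (b * a * b) := by noncomm_ring
      _ = a * b := by rw [h2]
  have hp : IsIdempotentElem p := hab_idem.one_sub
  have hapc : a * p = p * a := by
    have : a * (b * a) = a * (a * b) := by rw [← h1]
    calc a * p = a - a * (a * b) := by rw [hpdef]; noncomm_ring
      _ = a - a * (b * a) := by rw [this]
      _ = p * a := by rw [hpdef]; noncomm_ring
  have hcommute : Commute a p := hapc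
  have hap_pow : a ^ (k + 1) * p = 0 := by
    have e1 : a ^ (k + 1) * (a * b) = a ^ (k + 1) := by
      calc a ^ (k + 1) * (a * b) = (a ^ (k + 1) * a) * b := by rw [mul_assoc]
        _ = a * (a ^ (k + 1) * b) := by
            rw [← pow_succ, pow_succ' a (k+1), mul_assoc]
        _ = a * a ^ k := by rw [h3]
        _ = a ^ (k + 1) := by rw [← pow_succ']
    calc a ^ (k + 1) * p = a ^ (k + 1) - a ^ (k + 1) * (a * b) := by
          rw [hpdef]; noncomm_ring
      _ = 0 := by rw [e1, sub_self]
  have hnil : IsNilpotent (a * p) := by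
    refine ⟨k + 1, ?_⟩
    calc (a * p) ^ (k + 1) = a ^ (k + 1) * p ^ (k + 1) := hcommute.mul_pow (k + 1)
      _ = a ^ (k + 1) * p := by rw [hp.pow_succ_eq]
      _ = 0 := hap_pow
  have hbp : b * p = 0 := by
    calc b * p = b - b * (a * b) := by rw [hpdef]; noncomm_ring
      _ = b - b * a * b := by rw [mul_assoc]
      _ = 0 := by rw [h2, sub_self]
  have hpb : p * b = 0 := by
    have e2 : (a * b) * b = b := by
      calc (a * b) * b = (b * a) * b := by rw [h1]
        _ = b := h2
    calc p * b = b - (a * b) * b := by rw [hpdef]; noncomm_ring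
      _ = 0 := by rw [e2, sub_self]
  have hmul1 : (a + p) * (b + p) = 1 + a * p := by
    have : (a + p) * (b + p) = a * b + a * p + (p * b + p * p) := by noncomm_ring
    rw [this, hpb, hp.eq, zero_add]
    rw [hpdef]; noncomm_ring
  have hmul2 : (b + p) * (a + p) = 1 + a * p := by
    have : (b + p) * (a + p) = b * a + b * p + (p * a + p * p) := by noncomm_ring
    rw [this, hbp, hp.eq, add_zero, ← h1, ← hapc]
    rw [hpdef]; noncomm_ring
  have hw : IsUnit (1 + a * p) := hnil.isUnit_one_add
  obtain ⟨w, hwval⟩ := hw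
  set c := (b + p) * ↑w⁻¹ with hcdef
  have hr : (a + p) * c = 1 := by
    calc (a + p) * c = ((a + p) * (b + p)) * ↑w⁻¹ := by rw [hcdef, mul_assoc]
      _ = ↑w * ↑w⁻¹ := by rw [hmul1, hwval]
      _ = 1 := w.mul_inv
  have hl : (↑w⁻¹ * (b + p)) * (a + p) = 1 := by
    calc (↑w⁻¹ * (b + p)) * (a + p) = ↑w⁻¹ * ((b + p) * (a + p)) := by rw [mul_assoc]
      _ = ↑w⁻¹ * ↑w := by rw [hmul2, hwval]
      _ = 1 := w.inv_mul
  have hlc : (↑w⁻¹ * (b + p)) = c := by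
    calc (↑w⁻¹ * (b + p)) = (↑w⁻¹ * (b + p)) * ((a + p) * c) := by rw [hr, mul_one]
      _ = ((↑w⁻¹ * (b + p)) * (a + p)) * c := by noncomm_ring
      _ = c := by rw [hl, one_mul]
  have hlc' : c * (a + p) = 1 := by rw [← hlc]; exact hl
  have happ : (a + p) * p = p * (a + p) := by
    calc (a + p) * p = a * p + p * p := by noncomm_ring
      _ = p * a + p * p := by rw [hapc]
      _ = p * (a + p) := by noncomm_ring
  have hcp : c * p = p * c := by
    calc c * p = (c * p) * ((a + p) * c) := by rw [hr, mul_one]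
      _ = c * (p * (a + p)) * c := by noncomm_ring
      _ = c * ((a + p) * p) * c := by rw [happ]
      _ = (c * (a + p)) * (p * c) := by noncomm_ring
      _ = p * c := by rw [hlc', one_mul]
  exact ⟨⟨p, hp, hapc, hnil, c, hlc', hcp⟩, ⟨p, hp, hapc, hnil, c, hr, hcp⟩⟩

/-- Left and right Drazin invertibility give two-sided π-regularity. -/
lemma pireg_of_left_right (a : A) (hL : IsLeftDrazinInvertible a)
    (hR : IsRightDrazinInvertible a) :
    ∃ (k : ℕ) (u v : A), u * a ^ (k + 1) = a ^ k ∧ a ^ (k + 1) * v = a ^ k := by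
  have key : ∀ (p : A), IsIdempotentElem p → a * p = p * a → IsNilpotent (a * p) →
      ∃ m : ℕ, a ^ (m + 1) * p = 0 := by
    intro p hp hc ⟨m, hm⟩
    have hpow : ∀ j : ℕ, (a * p) ^ (j + 1) = a ^ (j + 1) * p := by
      intro j
      calc (a * p) ^ (j + 1) = a ^ (j + 1) * p ^ (j + 1) := (Commute.mul_pow hc (j+1))
        _ = a ^ (j + 1) * p := by rw [hp.pow_succ_eq]
    refine ⟨m, ?_⟩
    have : (a * p) ^ (m + 1) = 0 := by rw [pow_succ, hm, zero_mul]
    rw [← hpow m, this]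
  obtain ⟨p, hp, hc, hnil, b, hb, -⟩ := hL
  obtain ⟨q, hq, hqc, hqnil, c, hcr, -⟩ := hR
  obtain ⟨m₁, hm₁⟩ := key p hp hc hnil
  obtain ⟨m₂, hm₂⟩ := key q hq hqc hqnil
  obtain ⟨k, hle1, hle2⟩ : ∃ k, m₁ + 1 ≤ k ∧ m₂ + 1 ≤ k :=
    ⟨max (m₁ + 1) (m₂ + 1), le_max_left _ _, le_max_right _ _⟩
  refine ⟨k, b, c, ?_, ?_⟩
  · have h1 : b * a ^ (m₁ + 2) = a ^ (m₁ + 1) := by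
      have e : (a + p) * a ^ (m₁ + 1) = a ^ (m₁ + 2) := by
        calc (a + p) * a ^ (m₁ + 1) = a * a ^ (m₁ + 1) + p * a ^ (m₁ + 1) := by noncomm_ring
          _ = a ^ (m₁ + 2) + a ^ (m₁ + 1) * p := by
              rw [← pow_succ' a (m₁ + 1), (Commute.pow_right hc.symm (m₁ + 1)).eq]
          _ = a ^ (m₁ + 2) := by rw [hm₁, add_zero]
      calc b * a ^ (m₁ + 2) = b * ((a + p) * a ^ (m₁ + 1)) := by rw [e]
        _ = (b * (a + p)) * a ^ (m₁ + 1) := by rw [mul_assoc]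
        _ = a ^ (m₁ + 1) := by rw [hb, one_mul]
    -- extend to exponent k
    obtain ⟨d, rfl⟩ : ∃ d, k = (m₁ + 1) + d := ⟨k - (m₁ + 1), by omega⟩
    have e1 : a ^ (m₁ + 1 + d + 1) = a ^ (m₁ + 2) * a ^ d := by
      rw [← pow_add]; congr 1; omega
    have e2 : a ^ (m₁ + 1) * a ^ d = a ^ (m₁ + 1 + d) := by rw [← pow_add]
    rw [e1, ← mul_assoc, h1, e2]
  · have h2 : a ^ (m₂ + 2) * c = a ^ (m₂ + 1) := by
      have e : a ^ (m₂ + 1) * (a + q) = a ^ (m₂ + 2) := by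
        calc a ^ (m₂ + 1) * (a + q) = a ^ (m₂ + 1) * a + a ^ (m₂ + 1) * q := by noncomm_ring
          _ = a ^ (m₂ + 2) := by rw [hm₂, add_zero, ← pow_succ]
      calc a ^ (m₂ + 2) * c = (a ^ (m₂ + 1) * (a + q)) * c := by rw [e]
        _ = a ^ (m₂ + 1) * ((a + q) * c) := by rw [mul_assoc]
        _ = a ^ (m₂ + 1) := by rw [hcr, mul_one]
    obtain ⟨d, rfl⟩ : ∃ d, k = (m₂ + 1) + d := ⟨k - (m₂ + 1), by omega⟩
    have e1 : a ^ (m₂ + 1 + d + 1) = a ^ d * a ^ (m₂ + 2) := by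
      rw [← pow_add]; congr 1; omega
    have e2 : a ^ d * a ^ (m₂ + 1) = a ^ (m₂ + 1 + d) := by rw [← pow_add]; congr 1; omega
    rw [e1, mul_assoc, h2, e2]

end RingLemmas2


section FA

lemma clm_mem_ker {R M N : Type*} [Semiring R] [AddCommMonoid M] [AddCommMonoid N] [Module R M]
    [Module R N] [TopologicalSpace M] [TopologicalSpace N] {f : M →L[R] N} {x : M}
    (h : x ∈ LinearMap.ker f.toLinearMap) : f x = 0 := h

variable {E F G : Type*} [NormedAddCommGroup E] [NormedSpace ℂ E]
  [NormedAddCommGroup F] [NormedSpace ℂ F] [NormedAddCommGroup G] [NormedSpace ℂ G]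

lemma fr_comp (g : E →L[ℂ] F) (f : F →L[ℂ] G)
    (h : FiniteDimensional ℂ (LinearMap.range g.toLinearMap)) :
    FiniteDimensional ℂ (LinearMap.range (f.comp g).toLinearMap) := by
  haveI := h
  haveI : FiniteDimensional ℂ (Submodule.map (f : F →ₗ[ℂ] G) (LinearMap.range g.toLinearMap)) :=
    Module.Finite.map _ _
  have hle : LinearMap.range (f.comp g).toLinearMap ≤
      Submodule.map (f : F →ₗ[ℂ] G) (LinearMap.range g.toLinearMap) := by
    rintro z ⟨w, rfl⟩
    exact ⟨g w, LinearMap.mem_range_self g.toLinearMap w, rfl⟩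
  exact Submodule.finiteDimensional_of_le hle

lemma fr_comp' (g : E →L[ℂ] F) (f : F →L[ℂ] G)
    (h : FiniteDimensional ℂ (LinearMap.range f.toLinearMap)) :
    FiniteDimensional ℂ (LinearMap.range (f.comp g).toLinearMap) := by
  haveI := h
  have hle : LinearMap.range (f.comp g).toLinearMap ≤ LinearMap.range f.toLinearMap := by
    rintro z ⟨w, rfl⟩; exact ⟨g w, rfl⟩
  exact Submodule.finiteDimensional_of_le hle

lemma fr_add (f g : E →L[ℂ] F) (hf : FiniteDimensional ℂ (LinearMap.range f.toLinearMap))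
    (hg : FiniteDimensional ℂ (LinearMap.range g.toLinearMap)) :
    FiniteDimensional ℂ (LinearMap.range (f + g).toLinearMap) := by
  haveI := hf; haveI := hg
  have hle : LinearMap.range (f + g).toLinearMap ≤ LinearMap.range f.toLinearMap ⊔ LinearMap.range g.toLinearMap := by
    rintro z ⟨w, rfl⟩
    exact Submodule.add_mem_sup (LinearMap.mem_range_self f.toLinearMap w) (LinearMap.mem_range_self g.toLinearMap w)
  exact Submodule.finiteDimensional_of_le hle

lemma fr_neg (f : E →L[ℂ] F) (hf : FiniteDimensional ℂ (LinearMap.range f.toLinearMap)) :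
    FiniteDimensional ℂ (LinearMap.range (-f).toLinearMap) := by
  haveI := hf
  have hle : LinearMap.range (-f).toLinearMap ≤ LinearMap.range f.toLinearMap := by
    rintro z ⟨w, rfl⟩; exact ⟨-w, by simp⟩
  exact Submodule.finiteDimensional_of_le hle

lemma findim_quot_ker (f : E →L[ℂ] F) (h : FiniteDimensional ℂ (LinearMap.range f.toLinearMap)) :
    FiniteDimensional ℂ (E ⧸ LinearMap.ker f.toLinearMap) := by
  haveI : FiniteDimensional ℂ (LinearMap.range (f : E →ₗ[ℂ] F)) := h
  exact (f : E →ₗ[ℂ] F).quotKerEquivRange.symm.finiteDimensional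

/-- The sum of a closed submodule and a finite-dimensional submodule is closed. -/
lemma isClosed_sup_fd (N V : Submodule ℂ E) (hN : IsClosed (N : Set E))
    (hV : FiniteDimensional ℂ V) : IsClosed ((N ⊔ V : Submodule ℂ E) : Set E) := by
  haveI := hN
  haveI := hV
  -- quotient map as a continuous linear map
  let q : E →L[ℂ] (E ⧸ N) :=
    LinearMap.mkContinuous N.mkQ 1 (fun x => by
      simpa [one_mul] using Submodule.Quotient.norm_mk_le N x)
  have hq : ∀ x : E, q x = Submodule.Quotient.mk x := fun _ => rfl
  haveI : FiniteDimensional ℂ (Submodule.map N.mkQ V) := Module.Finite.map _ _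
  have hclosed : IsClosed ((Submodule.map N.mkQ V : Submodule ℂ (E ⧸ N)) : Set (E ⧸ N)) :=
    Submodule.closed_of_finiteDimensional _
  have hset : ((N ⊔ V : Submodule ℂ E) : Set E) = q ⁻¹' (Submodule.map N.mkQ V : Set (E ⧸ N)) := by
    ext x
    simp only [Set.mem_preimage, SetLike.mem_coe]
    constructor
    · intro hx
      obtain ⟨n, hn, v, hv, rfl⟩ := Submodule.mem_sup.mp hx
      refine ⟨v, hv, ?_⟩
      rw [hq]
      rw [Submodule.mkQ_apply, Submodule.Quotient.eq]
      simpa using hn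
    · rintro ⟨v, hv, hxv⟩
      rw [hq] at hxv
      rw [Submodule.mkQ_apply] at hxv
      have : x - v ∈ N := by
        rw [← Submodule.Quotient.eq]
        exact hxv.symm
      have hx : x = (x - v) + v := by abel
      rw [hx]
      exact Submodule.add_mem_sup this hv
  rw [hset]
  exact hclosed.preimage q.continuous

/-- If `N ≤ M ≤ N ⊔ V` with `N` closed and `V` finite-dimensional, then `M` is closed. -/
lemma isClosed_of_sandwich (N M V : Submodule ℂ E) (hNM : N ≤ M) (hMV : M ≤ N ⊔ V)
    (hN : IsClosed (N : Set E)) (hV : FiniteDimensional ℂ V) : IsClosed (M : Set E) := by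
  haveI := hV
  have h1 : M = N ⊔ (V ⊓ M) := by
    apply le_antisymm
    · intro x hxM
      obtain ⟨n, hn, v, hv, rfl⟩ := Submodule.mem_sup.mp (hMV hxM)
      have hvM : v ∈ M := by
        have : v = (n + v) - n := by abel
        rw [this]
        exact Submodule.sub_mem M hxM (hNM hn)
      exact Submodule.add_mem_sup hn (Submodule.mem_inf.mpr ⟨hv, hvM⟩)
    · exact sup_le hNM (le_trans inf_le_right le_rfl)
  rw [h1]
  exact isClosed_sup_fd N (V ⊓ M) hN (Submodule.finiteDimensional_of_le inf_le_left)

/-- A finite-codimensional subspace has a finite-dimensional complement-ish supplement. -/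
lemma exists_fd_compl (N : Submodule ℂ E) (h : FiniteDimensional ℂ (E ⧸ N)) :
    ∃ V : Submodule ℂ E, FiniteDimensional ℂ V ∧ N ⊔ V = ⊤ := by
  haveI := h
  obtain ⟨V, hV⟩ := N.exists_isCompl
  haveI : FiniteDimensional ℂ V := (N.quotientEquivOfIsCompl V hV).finiteDimensional
  exact ⟨V, inferInstance, hV.sup_eq_top⟩

/-- A submodule containing a closed finite-codimensional submodule is closed. -/
lemma isClosed_of_le_fincodim (N M : Submodule ℂ E) (hN : IsClosed (N : Set E))
    (hq : FiniteDimensional ℂ (E ⧸ N)) (hle : N ≤ M) : IsClosed (M : Set E) := by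
  obtain ⟨V, hV, hsup⟩ := exists_fd_compl N hq
  exact isClosed_of_sandwich N M V hle (by rw [hsup]; exact le_top) hN hV

/-- A continuous linear map vanishing on a finite-codimensional submodule has
finite-dimensional range. -/
lemma fr_of_vanishing (f : E →L[ℂ] F) (N : Submodule ℂ E)
    (hq : FiniteDimensional ℂ (E ⧸ N)) (hv : ∀ x ∈ N, f x = 0) :
    FiniteDimensional ℂ (LinearMap.range f.toLinearMap) := by
  obtain ⟨V, hV, hsup⟩ := exists_fd_compl N hq
  haveI := hV
  haveI : FiniteDimensional ℂ (Submodule.map (f : E →ₗ[ℂ] F) V) := Module.Finite.map _ _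
  have : LinearMap.range f.toLinearMap = Submodule.map (f : E →ₗ[ℂ] F) (N ⊔ V) := by
    rw [hsup, ← LinearMap.range_eq_map]
  rw [this, Submodule.map_sup]
  have hN0 : Submodule.map (f : E →ₗ[ℂ] F) N = ⊥ := by
    rw [Submodule.eq_bot_iff]
    rintro y ⟨x, hx, rfl⟩
    exact hv x hx
  rw [hN0, bot_sup_eq]
  infer_instance

/-- Any submodule is, modulo a finite-dimensional subspace, inside `p ⊓ ker g` whenever
`g` has finite rank. -/
lemma exists_fd_sup_inf_ker (p : Submodule ℂ E) (g : E →L[ℂ] F)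
    (hg : FiniteDimensional ℂ (LinearMap.range g.toLinearMap)) :
    ∃ W : Submodule ℂ E, FiniteDimensional ℂ W ∧ p ≤ (p ⊓ LinearMap.ker g.toLinearMap) ⊔ W := by
  haveI := hg
  set g' : p →ₗ[ℂ] F := (g : E →ₗ[ℂ] F).comp p.subtype with hg'def
  obtain ⟨w, hw⟩ := (LinearMap.ker g').exists_isCompl
  haveI : FiniteDimensional ℂ (p ⧸ LinearMap.ker g') := by
    have hle : LinearMap.range g' ≤ LinearMap.range g.toLinearMap := by
      rintro z ⟨x, rfl⟩; exact ⟨p.subtype x, rfl⟩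
    haveI : FiniteDimensional ℂ (LinearMap.range g') := Submodule.finiteDimensional_of_le hle
    exact g'.quotKerEquivRange.symm.finiteDimensional
  haveI : FiniteDimensional ℂ w :=
    ((LinearMap.ker g').quotientEquivOfIsCompl w hw).finiteDimensional
  refine ⟨Submodule.map p.subtype w, Module.Finite.map _ _, ?_⟩
  intro x hx
  have hx' : (⟨x, hx⟩ : p) ∈ LinearMap.ker g' ⊔ w := by rw [hw.sup_eq_top]; trivial
  obtain ⟨u, hu, v, hv, huv⟩ := Submodule.mem_sup.mp hx'
  have hxuv : x = (u : E) + (v : E) := by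
    have := congrArg (p.subtype) huv
    simpa using this.symm
  rw [hxuv]
  apply Submodule.add_mem_sup
  · refine Submodule.mem_inf.mpr ⟨u.2, ?_⟩
    simpa [g', LinearMap.mem_ker] using hu
  · exact ⟨v, hv, rfl⟩


variable [CompleteSpace E]

/-- A continuous endomorphism with finite-dimensional kernel and closed range maps closed
submodules to closed submodules. -/
lemma isClosed_map_clm (C : E →L[ℂ] E) (hker : FiniteDimensional ℂ (LinearMap.ker C.toLinearMap))
    (hrange : IsClosed ((LinearMap.range C.toLinearMap : Submodule ℂ E) : Set E))
    (Z : Submodule ℂ E) (hZ : IsClosed (Z : Set E)) :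
    IsClosed ((Submodule.map (C : E →ₗ[ℂ] E) Z : Submodule ℂ E) : Set E) := by
  classical
  haveI := hker
  -- continuous projection onto the kernel
  have cc : (LinearMap.ker C.toLinearMap).ClosedComplemented :=
    Submodule.ClosedComplemented.of_finiteDimensional _
  obtain ⟨pk, hpk⟩ := cc
  set P : E →L[ℂ] E := (LinearMap.ker C.toLinearMap).subtypeL.comp pk with hPdef
  have hPmem : ∀ x : E, P x ∈ LinearMap.ker C.toLinearMap := fun x => ((pk x) : LinearMap.ker C.toLinearMap).2
  have hPid : ∀ x ∈ LinearMap.ker C.toLinearMap, P x = x := by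
    intro x hx
    have := hpk ⟨x, hx⟩
    simpa [hPdef] using congrArg (Subtype.val) this
  set D : Submodule ℂ E := LinearMap.ker P.toLinearMap with hDdef
  have hDclosed : IsClosed (D : Set E) := ContinuousLinearMap.isClosed_ker P
  have hsubD : ∀ x : E, x - P x ∈ D := by
    intro x
    have : P (x - P x) = P x - P (P x) := map_sub P x (P x)
    have hPP : P (P x) = P x := hPid (P x) (hPmem x)
    simp [hDdef, LinearMap.mem_ker, this, hPP]
  -- C is injective on D
  have hinjD : ∀ x ∈ D, C x = 0 → x = 0 := by
    intro x hxD hCx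
    have : P x = x := hPid x hCx
    replace hxD := clm_mem_ker hxD
    rw [hxD] at this
    exact this.symm
  set e : D →L[ℂ] E := C.comp D.subtypeL with hedef
  have hinj : Function.Injective e := by
    intro x y hxy
    have : C ((x : E) - y) = 0 := by
      have : C (x : E) = C (y : E) := hxy
      rw [map_sub, this, sub_self]
    have hz := hinjD ((x : E) - y) (D.sub_mem x.2 y.2) this
    exact Subtype.ext (sub_eq_zero.mp hz)
  -- range of e is the range of C
  have hrangee : Set.range ⇑e = ((LinearMap.range C.toLinearMap : Submodule ℂ E) : Set E) := by
    ext y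
    constructor
    · rintro ⟨d, rfl⟩
      exact ⟨(d : E), rfl⟩
    · rintro ⟨x, rfl⟩
      refine ⟨⟨x - P x, hsubD x⟩, ?_⟩
      show C (x - P x) = C x
      rw [map_sub, clm_mem_ker (hPmem x), sub_zero]
  haveI : CompleteSpace D := hDclosed.completeSpace_coe
  have hcloe : IsClosed (Set.range ⇑e) := by rw [hrangee]; exact hrange
  set ceq := e.equivRange hinj hcloe with heqdef
  set K : NNReal := ‖(ceq.symm : ↥(LinearMap.range e.toLinearMap) →L[ℂ] ↥D)‖₊ with hKdef
  have hbound : ∀ d : D, ‖d‖ ≤ (K : ℝ) * ‖e d‖ := by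
    intro d
    have h1 : ceq.symm (ceq d) = d := ceq.symm_apply_apply d
    have h2 : ‖ceq.symm (ceq d)‖ ≤ (K : ℝ) * ‖ceq d‖ :=
      (ceq.symm : ↥(LinearMap.range e.toLinearMap) →L[ℂ] ↥D).le_opNorm (ceq d)
    have h3 : ‖(ceq d : E)‖ = ‖e d‖ := by
      have : ((ceq d : ↥(LinearMap.range e.toLinearMap)) : E) = e d := rfl
      rw [this]
    rw [h1] at h2
    calc ‖d‖ ≤ (K : ℝ) * ‖ceq d‖ := h2
      _ = (K : ℝ) * ‖e d‖ := by rw [← h3]; rfl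
  -- reduce to a closed piece inside D
  set Z₁ : Submodule ℂ E := Z ⊔ LinearMap.ker C.toLinearMap with hZ₁def
  have hZ₁closed : IsClosed (Z₁ : Set E) := isClosed_sup_fd Z _ hZ hker
  set Z₂ : Submodule ℂ E := D ⊓ Z₁ with hZ₂def
  have hZ₂closed : IsClosed (Z₂ : Set E) := (hDclosed.inter hZ₁closed)
  have hmapeq : Submodule.map (C : E →ₗ[ℂ] E) Z = Submodule.map (C : E →ₗ[ℂ] E) Z₂ := by
    apply le_antisymm
    · rintro y ⟨x, hx, rfl⟩
      refine ⟨x - P x, ?_, ?_⟩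
      · refine Submodule.mem_inf.mpr ⟨hsubD x, ?_⟩
        exact Z₁.sub_mem (Submodule.mem_sup_left hx) (Submodule.mem_sup_right (hPmem x))
      · show C (x - P x) = C x
        rw [map_sub, clm_mem_ker (hPmem x), sub_zero]
    · rintro y ⟨x, hx, rfl⟩
      obtain ⟨w, hw, kk, hkk, rfl⟩ := Submodule.mem_sup.mp (Submodule.mem_inf.mp hx).2
      refine ⟨w, hw, ?_⟩
      show C w = C (w + kk)
      rw [map_add, clm_mem_ker hkk, add_zero]
  set g : Z₂ →L[ℂ] E := C.comp Z₂.subtypeL with hgdef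
  haveI : CompleteSpace Z₂ := hZ₂closed.completeSpace_coe
  have hanti : AntilipschitzWith K g := by
    apply g.antilipschitz_of_bound
    intro z
    have hzD : (z : E) ∈ D := (Submodule.mem_inf.mp z.2).1
    have := hbound ⟨(z : E), hzD⟩
    simpa [hgdef, hedef] using this
  have hclosedrange : IsClosed (Set.range ⇑g) := hanti.isClosed_range g.uniformContinuous
  have hfinal : ((Submodule.map (C : E →ₗ[ℂ] E) Z₂ : Submodule ℂ E) : Set E) = Set.range ⇑g := by
    ext y
    constructor
    · rintro ⟨x, hx, rfl⟩
      exact ⟨⟨x, hx⟩, rfl⟩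
    · rintro ⟨z, rfl⟩
      exact ⟨(z : E), z.2, rfl⟩
  rw [hmapeq, hfinal]
  exact hclosedrange

/-- Closedness of the range of an operator that is "regular modulo finite rank". -/
lemma isClosed_range_of_rel_regular (A B : E →L[ℂ] E)
    (hABA : FiniteDimensional ℂ (LinearMap.range (A * B * A - A).toLinearMap))
    (hBAB : FiniteDimensional ℂ (LinearMap.range (B * A * B - B).toLinearMap))
    (hC : FiniteDimensional ℂ (LinearMap.range (A * B - B * A).toLinearMap)) :
    IsClosed ((LinearMap.range A.toLinearMap : Submodule ℂ E) : Set E) := by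
  classical
  have mulL : ∀ f g : E →L[ℂ] E, FiniteDimensional ℂ (LinearMap.range g.toLinearMap) →
      FiniteDimensional ℂ (LinearMap.range (f * g).toLinearMap) := fun f g h => fr_comp g f h
  have mulR : ∀ f g : E →L[ℂ] E, FiniteDimensional ℂ (LinearMap.range f.toLinearMap) →
      FiniteDimensional ℂ (LinearMap.range (f * g).toLinearMap) := fun f g h => fr_comp' g f h
  have subF : ∀ f g : E →L[ℂ] E, FiniteDimensional ℂ (LinearMap.range f.toLinearMap) →
      FiniteDimensional ℂ (LinearMap.range g.toLinearMap) →
      FiniteDimensional ℂ (LinearMap.range (f - g).toLinearMap) := by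
    intro f g hf hg
    rw [sub_eq_add_neg]
    exact fr_add f (-g) hf (fr_neg g hg)
  have addF := fun (f g : E →L[ℂ] E) => fr_add f g
  set E₀ : E →L[ℂ] E := A * B with hE₀def
  set K : E →L[ℂ] E := E₀ * E₀ - E₀ with hKdef2
  have hK : FiniteDimensional ℂ (LinearMap.range K.toLinearMap) := by
    have hid : K = (A * B * A - A) * B := by rw [hKdef2, hE₀def]; try noncomm_ring
    rw [hid]
    exact mulR _ B hABA
  set kerK : Submodule ℂ E := LinearMap.ker K.toLinearMap with hkerKdef
  have hkerKclosed : IsClosed (kerK : Set E) := ContinuousLinearMap.isClosed_ker K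
  have hquot : FiniteDimensional ℂ (E ⧸ kerK) := findim_quot_ker K hK
  have hKE : K * E₀ = E₀ * K := by rw [hKdef2]; try noncomm_ring
  have hEker : ∀ x ∈ kerK, E₀ x ∈ kerK := by
    intro x hx
    show K (E₀ x) = 0
    have : K (E₀ x) = (K * E₀) x := rfl
    rw [this, hKE]
    show E₀ (K x) = 0
    rw [clm_mem_ker hx, map_zero]
  haveI := hquot
  have cc : kerK.ClosedComplemented :=
    Submodule.ClosedComplemented.of_quotient_finiteDimensional hkerKclosed
  obtain ⟨pk0, hpk0⟩ := cc
  set P₀ : E →L[ℂ] E := kerK.subtypeL.comp pk0 with hP₀def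
  have hP₀mem : ∀ x : E, P₀ x ∈ kerK := fun x => ((pk0 x) : kerK).2
  have hP₀id : ∀ x ∈ kerK, P₀ x = x := by
    intro x hx
    have := hpk0 ⟨x, hx⟩
    simpa [hP₀def] using congrArg (Subtype.val) this
  set Q : E →L[ℂ] E := E₀ * P₀ with hQdef
  have hQapp : ∀ x : E, Q x = E₀ (P₀ x) := fun x => rfl
  have hQidem : Q * Q = Q := by
    ext x
    have h1 : P₀ (E₀ (P₀ x)) = E₀ (P₀ x) := hP₀id _ (hEker _ (hP₀mem x))
    show E₀ (P₀ (E₀ (P₀ x))) = E₀ (P₀ x)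
    rw [h1]
    have h3 : E₀ (E₀ (P₀ x)) = K (P₀ x) + E₀ (P₀ x) := by
      have h4 : K (P₀ x) = E₀ (E₀ (P₀ x)) - E₀ (P₀ x) := rfl
      rw [h4]; abel
    rw [h3, clm_mem_ker (hP₀mem x), zero_add]
  have hfrPc : FiniteDimensional ℂ (LinearMap.range ((1 : E →L[ℂ] E) - P₀).toLinearMap) := by
    apply fr_of_vanishing _ kerK hquot
    intro x hx
    show x - P₀ x = 0
    rw [hP₀id x hx]
    exact sub_self x
  have hQE : FiniteDimensional ℂ (LinearMap.range (Q - E₀).toLinearMap) := by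
    have hid : Q - E₀ = -(E₀ * ((1 : E →L[ℂ] E) - P₀)) := by rw [hQdef]; try noncomm_ring
    rw [hid]
    exact fr_neg _ (mulL _ _ hfrPc)
  have hEB : FiniteDimensional ℂ (LinearMap.range (E₀ * B - B).toLinearMap) := by
    have hid : E₀ * B - B = (A * B - B * A) * B + (B * A * B - B) := by
      rw [hE₀def]; try noncomm_ring
    rw [hid]; exact addF _ _ (mulR _ _ hC) hBAB
  have hBE : FiniteDimensional ℂ (LinearMap.range (B * E₀ - B).toLinearMap) := by
    have hid : B * E₀ - B = B * A * B - B := by rw [hE₀def]; try noncomm_ring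
    rw [hid]; exact hBAB
  have hEA : FiniteDimensional ℂ (LinearMap.range (E₀ * A - A).toLinearMap) := by
    have hid : E₀ * A - A = A * B * A - A := by rw [hE₀def]; try noncomm_ring
    rw [hid]; exact hABA
  have hAE : FiniteDimensional ℂ (LinearMap.range (A * E₀ - A).toLinearMap) := by
    have hid : A * E₀ - A = A * (A * B - B * A) + (A * B * A - A) := by
      rw [hE₀def]; try noncomm_ring
    rw [hid]; exact addF _ _ (mulL _ _ hC) hABA
  have hAQ : FiniteDimensional ℂ (LinearMap.range (A * Q - A).toLinearMap) := by
    have hid : A * Q - A = A * (Q - E₀) + (A * E₀ - A) := by noncomm_ring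
    rw [hid]; exact addF _ _ (mulL _ _ hQE) hAE
  have hQA : FiniteDimensional ℂ (LinearMap.range (Q * A - A).toLinearMap) := by
    have hid : Q * A - A = (Q - E₀) * A + (E₀ * A - A) := by noncomm_ring
    rw [hid]; exact addF _ _ (mulR _ _ hQE) hEA
  have hQB : FiniteDimensional ℂ (LinearMap.range (Q * B - B).toLinearMap) := by
    have hid : Q * B - B = (Q - E₀) * B + (E₀ * B - B) := by noncomm_ring
    rw [hid]; exact addF _ _ (mulR _ _ hQE) hEB
  have hBQ : FiniteDimensional ℂ (LinearMap.range (B * Q - B).toLinearMap) := by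
    have hid : B * Q - B = B * (Q - E₀) + (B * E₀ - B) := by noncomm_ring
    rw [hid]; exact addF _ _ (mulL _ _ hQE) hBE
  set A₁ : E →L[ℂ] E := A + 1 - Q with hA₁def
  set U : E →L[ℂ] E := B + 1 - Q with hUdef
  have hFr : FiniteDimensional ℂ (LinearMap.range (A₁ * U - 1).toLinearMap) := by
    have hid : A₁ * U - 1 = ((A * B - Q) - (A * Q - A)) + ((Q * Q - Q) - (Q * B - B)) := by
      rw [hA₁def, hUdef]; try noncomm_ring
    rw [hid]
    have h1 : FiniteDimensional ℂ (LinearMap.range (A * B - Q).toLinearMap) := by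
      have : A * B - Q = -(Q - E₀) := by rw [hE₀def]; try noncomm_ring
      rw [this]; exact fr_neg _ hQE
    have h2 : FiniteDimensional ℂ (LinearMap.range (Q * Q - Q).toLinearMap) := by
      rw [hQidem, sub_self]
      rw [show LinearMap.range (0 : E →L[ℂ] E).toLinearMap = ⊥ by ext x; simp [eq_comm]]
      infer_instance
    exact addF _ _ (subF _ _ h1 hAQ) (subF _ _ h2 hQB)
  have hFl : FiniteDimensional ℂ (LinearMap.range (U * A₁ - 1).toLinearMap) := by
    have hid : U * A₁ - 1 = ((B * A - Q) - (Q * A - A)) + ((Q * Q - Q) - (B * Q - B)) := by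
      rw [hA₁def, hUdef]; try noncomm_ring
    rw [hid]
    have h1 : FiniteDimensional ℂ (LinearMap.range (B * A - Q).toLinearMap) := by
      have : B * A - Q = -(A * B - B * A) - (Q - E₀) := by rw [hE₀def]; try noncomm_ring
      rw [this]
      exact subF _ _ (fr_neg _ hC) hQE
    have h2 : FiniteDimensional ℂ (LinearMap.range (Q * Q - Q).toLinearMap) := by
      rw [hQidem, sub_self]
      rw [show LinearMap.range (0 : E →L[ℂ] E).toLinearMap = ⊥ by ext x; simp [eq_comm]]
      infer_instance
    exact addF _ _ (subF _ _ h1 hQA) (subF _ _ h2 hBQ)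
  have hkerA₁ : FiniteDimensional ℂ (LinearMap.ker A₁.toLinearMap) := by
    have hle : LinearMap.ker A₁.toLinearMap ≤ LinearMap.range (U * A₁ - 1).toLinearMap := by
      intro x hx
      have h1 : (U * A₁ - 1) x = -x := by
        have : (U * A₁ - 1) x = U (A₁ x) - x := rfl
        rw [this, clm_mem_ker hx, map_zero, zero_sub]
      refine ⟨-x, ?_⟩
      rw [map_neg, show ((U * A₁ - 1 : E →L[ℂ] E) : E →ₗ[ℂ] E) x = -x from h1, neg_neg]
    haveI := hFl
    exact Submodule.finiteDimensional_of_le hle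
  have hrangeA₁ : IsClosed ((LinearMap.range A₁.toLinearMap : Submodule ℂ E) : Set E) := by
    have hN₀closed : IsClosed ((LinearMap.ker (A₁ * U - 1).toLinearMap : Submodule ℂ E) : Set E) :=
      ContinuousLinearMap.isClosed_ker _
    have hq := findim_quot_ker _ hFr
    have hle : LinearMap.ker (A₁ * U - 1).toLinearMap ≤ LinearMap.range A₁.toLinearMap := by
      intro w hw
      have h1 : A₁ (U w) - w = 0 := clm_mem_ker hw
      exact ⟨U w, by rw [← sub_eq_zero]; exact h1⟩
    exact isClosed_of_le_fincodim _ _ hN₀closed hq hle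
  have hQfix : ∀ x ∈ LinearMap.range Q.toLinearMap, Q x = x := by
    rintro x ⟨y, rfl⟩
    show Q (Q y) = Q y
    rw [← ContinuousLinearMap.mul_apply, hQidem]
  have hrangeQclosed : IsClosed ((LinearMap.range Q.toLinearMap : Submodule ℂ E) : Set E) := by
    have : LinearMap.range Q.toLinearMap = LinearMap.ker ((1 : E →L[ℂ] E) - Q).toLinearMap := by
      apply le_antisymm
      · intro x hx
        show x - Q x = 0
        rw [hQfix x hx, sub_self]
      · intro x hx
        have h1 : x - Q x = 0 := hx
        exact ⟨x, (sub_eq_zero.mp h1).symm⟩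
    rw [this]
    exact ContinuousLinearMap.isClosed_ker _
  set F' : E →L[ℂ] E := A - A * Q with hF'def
  have hF'fd : FiniteDimensional ℂ (LinearMap.range F'.toLinearMap) := by
    have : F' = -(A * Q - A) := by rw [hF'def]; try noncomm_ring
    rw [this]; exact fr_neg _ hAQ
  have hAeq : ∀ x ∈ LinearMap.range Q.toLinearMap, A₁ x = A x := by
    intro x hx
    have h1 : A₁ x = A x + x - Q x := rfl
    rw [h1, hQfix x hx]
    abel
  set N : Submodule ℂ E := Submodule.map (A₁ : E →ₗ[ℂ] E) (LinearMap.range Q.toLinearMap) with hNdef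
  have hNclosed : IsClosed (N : Set E) :=
    isClosed_map_clm A₁ hkerA₁ hrangeA₁ _ hrangeQclosed
  have hNle : N ≤ LinearMap.range A.toLinearMap := by
    rintro y ⟨z, hz, rfl⟩
    have : A₁ z = A z := hAeq z hz
    rw [show ((A₁ : E →ₗ[ℂ] E) z) = A₁ z from rfl, this]
    exact ⟨z, rfl⟩
  have hle2 : LinearMap.range A.toLinearMap ≤ N ⊔ LinearMap.range F'.toLinearMap := by
    rintro y ⟨x, rfl⟩
    have h1 : A x = A₁ (Q x) + F' x := by
      have : A₁ (Q x) = A (Q x) := hAeq (Q x) ⟨x, rfl⟩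
      rw [this]
      show A x = A (Q x) + (A x - (A * Q) x)
      have h2 : (A * Q) x = A (Q x) := rfl
      rw [h2]; abel
    rw [show (A : E →ₗ[ℂ] E) x = A₁ (Q x) + F' x from h1]
    exact Submodule.add_mem_sup ⟨Q x, ⟨x, rfl⟩, rfl⟩ ⟨x, rfl⟩
  exact isClosed_of_sandwich N (LinearMap.range A.toLinearMap) (LinearMap.range F'.toLinearMap) hNle hle2
    hNclosed hF'fd

/-- Iteration: if `1 - U*V` has finite rank then so does `1 - U^m * V^m`. -/
lemma findim_range_one_sub_pow (U V : E →L[ℂ] E)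
    (h : FiniteDimensional ℂ (LinearMap.range (1 - U * V).toLinearMap)) (m : ℕ) :
    FiniteDimensional ℂ (LinearMap.range (1 - U ^ m * V ^ m).toLinearMap) := by
  induction m with
  | zero =>
    rw [show (1 : E →L[ℂ] E) - U ^ 0 * V ^ 0 = 0 by simp]
    rw [show LinearMap.range (0 : E →L[ℂ] E).toLinearMap = ⊥ by ext x; simp [eq_comm]]
    infer_instance
  | succ m ih =>
    have hid : 1 - U ^ (m + 1) * V ^ (m + 1) =
        (1 - U ^ m * V ^ m) + U ^ m * ((1 - U * V) * V ^ m) := by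
      have h1 : U ^ (m + 1) = U ^ m * U := pow_succ U m
      have h2 : V ^ (m + 1) = V * V ^ m := pow_succ' V m
      rw [h1, h2]; noncomm_ring
    rw [hid]
    exact fr_add _ _ ih (fr_comp _ _ (fr_comp' _ _ h))

/-- Every Fredholm operator on a Banach space has a pseudo-inverse modulo finite rank. -/
lemma exists_pseudo_inverse (C : E →L[ℂ] E)
    (hclo : IsClosed ((LinearMap.range C.toLinearMap : Submodule ℂ E) : Set E))
    (hker : FiniteDimensional ℂ (LinearMap.ker C.toLinearMap))
    (hcoker : FiniteDimensional ℂ (E ⧸ LinearMap.range C.toLinearMap)) :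
    ∃ S : E →L[ℂ] E, FiniteDimensional ℂ (LinearMap.range (1 - C * S).toLinearMap) ∧
      FiniteDimensional ℂ (LinearMap.range (1 - S * C).toLinearMap) := by
  classical
  haveI := hker
  haveI := hcoker
  -- projection onto the kernel
  have cck : (LinearMap.ker C.toLinearMap).ClosedComplemented :=
    Submodule.ClosedComplemented.of_finiteDimensional _
  obtain ⟨pk, hpk⟩ := cck
  set P : E →L[ℂ] E := (LinearMap.ker C.toLinearMap).subtypeL.comp pk with hPdef
  have hPmem : ∀ x : E, P x ∈ LinearMap.ker C.toLinearMap := fun x => ((pk x) : LinearMap.ker C.toLinearMap).2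
  have hPid : ∀ x ∈ LinearMap.ker C.toLinearMap, P x = x := by
    intro x hx
    have := hpk ⟨x, hx⟩
    simpa [hPdef] using congrArg (Subtype.val) this
  set D : Submodule ℂ E := LinearMap.ker P.toLinearMap with hDdef
  have hDclosed : IsClosed (D : Set E) := ContinuousLinearMap.isClosed_ker P
  haveI : CompleteSpace D := hDclosed.completeSpace_coe
  haveI : CompleteSpace (LinearMap.range C.toLinearMap) := hclo.completeSpace_coe
  have hsubD : ∀ x : E, x - P x ∈ D := by
    intro x
    have h5 : P (x - P x) = P x - P (P x) := map_sub P x (P x)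
    have hPP : P (P x) = P x := hPid (P x) (hPmem x)
    show P (x - P x) = 0
    rw [h5, hPP, sub_self]
  -- projection onto the range
  have ccr : (LinearMap.range C.toLinearMap).ClosedComplemented :=
    Submodule.ClosedComplemented.of_quotient_finiteDimensional hclo
  obtain ⟨q, hq⟩ := ccr
  -- bijection from D to the range
  set f : D →L[ℂ] LinearMap.range C.toLinearMap :=
    (C.comp D.subtypeL).codRestrict (LinearMap.range C.toLinearMap)
      (fun x => LinearMap.mem_range_self C.toLinearMap (x : E)) with hfdef
  have hfinj : LinearMap.ker f.toLinearMap = ⊥ := by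
    rw [LinearMap.ker_eq_bot']
    intro d hd
    have h1 : C (d : E) = 0 := by
      have := congrArg (Subtype.val) hd
      exact this
    have h2 : P (d : E) = (d : E) := hPid _ h1
    have h3 : P (d : E) = 0 := d.2
    exact Subtype.ext (by rw [← h2, h3]; rfl)
  have hfsurj : LinearMap.range f.toLinearMap = ⊤ := by
    rw [LinearMap.range_eq_top]
    rintro ⟨y, x, rfl⟩
    refine ⟨⟨x - P x, hsubD x⟩, ?_⟩
    apply Subtype.ext
    show C (x - P x) = C x
    rw [map_sub, clm_mem_ker (hPmem x), sub_zero]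
  set e := ContinuousLinearEquiv.ofBijective f hfinj hfsurj with hedef
  set S : E →L[ℂ] E :=
    D.subtypeL.comp ((e.symm : LinearMap.range C.toLinearMap →L[ℂ] D).comp q) with hSdef
  have hCSC : C * S * C = C := by
    ext x
    show C (S (C x)) = C x
    have h1 : q (C x) = ⟨C x, LinearMap.mem_range_self C.toLinearMap x⟩ := by
      have := hq ⟨C x, LinearMap.mem_range_self C.toLinearMap x⟩
      simpa using this
    have h2 : S (C x) = (e.symm ⟨C x, LinearMap.mem_range_self C.toLinearMap x⟩ : E) := by
      rw [hSdef]
      show ((e.symm (q (C x)) : D) : E) = _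
      rw [h1]
    rw [h2]
    have h3 : C ((e.symm ⟨C x, LinearMap.mem_range_self C.toLinearMap x⟩ : D) : E) =
        ((f (e.symm ⟨C x, LinearMap.mem_range_self C.toLinearMap x⟩)) : E) := rfl
    rw [h3]
    have h4 : f (e.symm ⟨C x, LinearMap.mem_range_self C.toLinearMap x⟩) =
        ⟨C x, LinearMap.mem_range_self C.toLinearMap x⟩ :=
      ContinuousLinearEquiv.ofBijective_apply_symm_apply f hfinj hfsurj _
    rw [h4]
  refine ⟨S, ?_, ?_⟩
  · apply fr_of_vanishing _ (LinearMap.range C.toLinearMap) hcoker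
    rintro y ⟨x, rfl⟩
    show C x - (C * S) (C x) = 0
    have : (C * S) (C x) = (C * S * C) x := rfl
    rw [this, hCSC, sub_self]
  · have hle : LinearMap.range (1 - S * C).toLinearMap ≤ LinearMap.ker C.toLinearMap := by
      rintro y ⟨x, rfl⟩
      show C ((1 - S * C) x) = 0
      have h1 : C ((1 - S * C) x) = C x - (C * S * C) x := by
        have e1 : (1 - S * C) x = x - S (C x) := rfl
        rw [e1, map_sub]
        rfl
      rw [h1, hCSC, sub_self]
    exact Submodule.finiteDimensional_of_le hle

end FA


section Trio
variable {A : Type*} [Ring A]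

/-- Identities needed at high powers for a Drazin-inverse-like pair. -/
lemma ring_trio (a b : A) (k : ℕ) (hcomm : a * b = b * a) (hbab : b * a * b = b)
    (hpow : a ^ (k + 1) * b = a ^ k) (m : ℕ) (hm : k ≤ m) (h1m : 1 ≤ m) :
    a ^ m * b ^ m * a ^ m = a ^ m ∧ b ^ m * a ^ m * b ^ m = b ^ m ∧
      a ^ m * b ^ m = b ^ m * a ^ m ∧ b ^ m * a ^ (m + m) = a ^ m ∧
      a ^ (m + 1) * (a ^ (m - 1) * b ^ m) = a ^ m := by
  have hC : Commute a b := hcomm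
  have hext : ∀ j, k ≤ j → a ^ (j + 1) * b = a ^ j := by
    intro j hj
    obtain ⟨d, rfl⟩ : ∃ d, j = k + d := ⟨j - k, by omega⟩
    have e1 : a ^ (k + d + 1) = a ^ d * a ^ (k + 1) := by rw [← pow_add]; congr 1; omega
    have e2 : a ^ d * a ^ k = a ^ (k + d) := by rw [← pow_add]; congr 1; omega
    rw [e1, mul_assoc, hpow, e2]
  have r2 : ∀ (j m' : ℕ), k ≤ m' → a ^ (m' + j) * b ^ j = a ^ m' := by
    intro j
    induction j with
    | zero => intro m' _; simp
    | succ j ih =>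
      intro m' hm'
      have e1 : a ^ (m' + (j + 1)) = a ^ (m' + 1 + j) := by congr 1; omega
      calc a ^ (m' + (j + 1)) * b ^ (j + 1)
          = a ^ (m' + 1 + j) * (b ^ j * b) := by rw [e1, pow_succ]
        _ = (a ^ (m' + 1 + j) * b ^ j) * b := by rw [mul_assoc]
        _ = a ^ (m' + 1) * b := by rw [ih (m' + 1) (by omega)]
        _ = a ^ m' := hext m' hm'
  have I3 : a ^ m * b ^ m = b ^ m * a ^ m := (hC.pow_pow m m).eq
  have I1 : a ^ m * b ^ m * a ^ m = a ^ m := by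
    calc a ^ m * b ^ m * a ^ m = a ^ m * (b ^ m * a ^ m) := by rw [mul_assoc]
      _ = a ^ m * (a ^ m * b ^ m) := by rw [← I3]
      _ = (a ^ m * a ^ m) * b ^ m := by rw [mul_assoc]
      _ = a ^ (m + m) * b ^ m := by rw [← pow_add]
      _ = a ^ m := r2 m m hm
  have hidem : (a * b) * (a * b) = a * b := by
    calc (a * b) * (a * b) = a * (b * a * b) := by noncomm_ring
      _ = a * b := by rw [hbab]
  have hId : IsIdempotentElem (a * b) := hidem
  have I2 : b ^ m * a ^ m * b ^ m = b ^ m := by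
    obtain ⟨j, rfl⟩ : ∃ j, m = j + 1 := ⟨m - 1, by omega⟩
    calc b ^ (j + 1) * a ^ (j + 1) * b ^ (j + 1)
        = b ^ (j + 1) * (a ^ (j + 1) * b ^ (j + 1)) := by rw [mul_assoc]
      _ = b ^ (j + 1) * (a * b) ^ (j + 1) := by rw [hC.mul_pow]
      _ = b ^ (j + 1) * (a * b) := by rw [hId.pow_succ_eq]
      _ = (b ^ j * b) * (a * b) := by rw [pow_succ]
      _ = b ^ j * (b * a * b) := by noncomm_ring
      _ = b ^ j * b := by rw [hbab]
      _ = b ^ (j + 1) := by rw [pow_succ]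
  refine ⟨I1, I2, I3, ?_, ?_⟩
  · calc b ^ m * a ^ (m + m) = b ^ m * (a ^ m * a ^ m) := by rw [← pow_add]
      _ = (b ^ m * a ^ m) * a ^ m := by rw [mul_assoc]
      _ = (a ^ m * b ^ m) * a ^ m := by rw [← I3]
      _ = a ^ m := I1
  · have e1 : a ^ (m + 1) * a ^ (m - 1) = a ^ (m + m) := by rw [← pow_add]; congr 1; omega
    calc a ^ (m + 1) * (a ^ (m - 1) * b ^ m) = (a ^ (m + 1) * a ^ (m - 1)) * b ^ m := by
          rw [mul_assoc]
      _ = a ^ (m + m) * b ^ m := by rw [e1]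
      _ = a ^ m := r2 m m hm

end Trio

section Bridge

variable (X : Type*) [NormedAddCommGroup X] [NormedSpace ℂ X]

lemma mem_fri (F : X →L[ℂ] X) :
    F ∈ finiteRankIdeal X ↔ FiniteDimensional ℂ (LinearMap.range F.toLinearMap) :=
  TwoSidedIdeal.mem_mk' _ _ _ _ _ _ F

lemma quot_eq_iff (U V : X →L[ℂ] X) :
    (finiteRankIdeal X).ringCon.toQuotient U = (finiteRankIdeal X).ringCon.toQuotient V ↔
      FiniteDimensional ℂ (LinearMap.range (U - V).toLinearMap) := by
  rw [RingCon.eq, TwoSidedIdeal.rel_iff]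
  exact mem_fri X _

lemma toQuotient_surj : ∀ y : (finiteRankIdeal X).ringCon.Quotient,
    ∃ S : X →L[ℂ] X, (finiteRankIdeal X).ringCon.toQuotient S = y := by
  intro y
  obtain ⟨S, hS⟩ := Quot.exists_rep y
  exact ⟨S, hS⟩

lemma toQuotient_mul (U V : X →L[ℂ] X) :
    (finiteRankIdeal X).ringCon.toQuotient (U * V)
      = (finiteRankIdeal X).ringCon.toQuotient U * (finiteRankIdeal X).ringCon.toQuotient V := rfl

lemma toQuotient_pow (U : X →L[ℂ] X) (m : ℕ) :
    (finiteRankIdeal X).ringCon.toQuotient (U ^ m)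
      = ((finiteRankIdeal X).ringCon.toQuotient U) ^ m := by
  induction m with
  | zero => rfl
  | succ m ih => rw [pow_succ, pow_succ, toQuotient_mul X (U ^ m) U, ih]

end Bridge

end

set_option maxHeartbeats 1600000 in
/-- `T` is B-Fredholm iff `π(T)` is both left and right Drazin invertible in
`C₀(X) = L(X)/F₀(X)`. -/
theorem bFredholm_iff_left_and_right_drazin_in_C0
    (X : Type*) [NormedAddCommGroup X] [NormedSpace ℂ X] [CompleteSpace X]
    (T : X →L[ℂ] X) :
    IsBFredholm T ↔
      IsLeftDrazinInvertible ((finiteRankIdeal X).ringCon.toQuotient T) ∧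
        IsRightDrazinInvertible ((finiteRankIdeal X).ringCon.toQuotient T) := by
  classical
  constructor
  · rintro ⟨n, hclosed, hrngcl, hkerfd, hcokfd⟩
    set M : Submodule ℂ X := LinearMap.range (T ^ n).toLinearMap with hMdef
    haveI : CompleteSpace M := hclosed.completeSpace_coe
    set T₀ : M →L[ℂ] M := clmRestrict T M (range_pow_invariant T n) with hT₀def
    obtain ⟨S₀, h1, h2⟩ := exists_pseudo_inverse T₀ hrngcl hkerfd hcokfd
    have h1' := findim_range_one_sub_pow T₀ S₀ h1 (n + 1)
    have h2' := findim_range_one_sub_pow S₀ T₀ h2 (n + 1)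
    set ι : M →L[ℂ] X := M.subtypeL with hιdef
    set τ : X →L[ℂ] M := (T ^ n).codRestrict M (fun x => LinearMap.mem_range_self _ x)
      with hτdef
    set S : X →L[ℂ] X := ι.comp ((S₀ ^ (n + 1)).comp τ) with hSdef
    have hcoe : ∀ (m : M), ((T₀ m : M) : X) = T (m : X) := fun m => rfl
    have CR1 : ∀ (j : ℕ) (y : M), (T ^ j) ((y : X)) = (((T₀ ^ j) y : M) : X) := by
      intro j
      induction j with
      | zero => intro y; simp
      | succ j ih =>
        intro y
        rw [pow_succ' T j, pow_succ' T₀ j]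
        show T ((T ^ j) (y : X)) = ((T₀ ((T₀ ^ j) y) : M) : X)
        rw [ih y, hcoe]
    have key1 : FiniteDimensional ℂ (LinearMap.range (T ^ (n + 1) * S - T ^ n).toLinearMap) := by
      have main : ∀ x : X, (T ^ (n + 1)) (S x)
          = (T ^ n) x - ((((1 : M →L[ℂ] M) - T₀ ^ (n + 1) * S₀ ^ (n + 1)) (τ x) : M) : X) := by
        intro x
        have e1 : (T ^ (n + 1)) (S x) = (((T₀ ^ (n + 1)) ((S₀ ^ (n + 1)) (τ x)) : M) : X) := by
          have e0 : S x = (((S₀ ^ (n + 1)) (τ x) : M) : X) := rfl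
          rw [e0, CR1 (n + 1)]
        rw [e1]
        have e2 : (((1 : M →L[ℂ] M) - T₀ ^ (n + 1) * S₀ ^ (n + 1)) (τ x) : M)
            = τ x - (T₀ ^ (n + 1)) ((S₀ ^ (n + 1)) (τ x)) := rfl
        rw [e2, Submodule.coe_sub]
        have e3 : ((τ x : M) : X) = (T ^ n) x := rfl
        rw [e3]
        abel
      have hop : T ^ (n + 1) * S - T ^ n
          = -(ι.comp ((((1 : M →L[ℂ] M) - T₀ ^ (n + 1) * S₀ ^ (n + 1))).comp τ)) := by
        ext x
        have e0 : (T ^ (n + 1) * S - T ^ n) x = (T ^ (n + 1)) (S x) - (T ^ n) x := rfl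
        have e4 : (-(ι.comp ((((1 : M →L[ℂ] M) - T₀ ^ (n + 1) * S₀ ^ (n + 1))).comp τ))) x
            = -(((((1 : M →L[ℂ] M) - T₀ ^ (n + 1) * S₀ ^ (n + 1)) (τ x)) : M) : X) := rfl
        rw [e0, e4, main x]
        abel
      rw [hop]
      exact fr_neg _ (fr_comp _ _ (fr_comp' _ _ h1'))
    have key2 : FiniteDimensional ℂ (LinearMap.range (S * T ^ (n + 1) - T ^ n).toLinearMap) := by
      have hτT : ∀ x : X, τ ((T ^ (n + 1)) x) = (T₀ ^ (n + 1)) (τ x) := by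
        intro x
        apply Subtype.ext
        show (T ^ n) ((T ^ (n + 1)) x) = (((T₀ ^ (n + 1)) (τ x) : M) : X)
        rw [← CR1 (n + 1) (τ x)]
        show (T ^ n) ((T ^ (n + 1)) x) = (T ^ (n + 1)) ((T ^ n) x)
        rw [← ContinuousLinearMap.mul_apply, ← ContinuousLinearMap.mul_apply,
          ← pow_add, ← pow_add, Nat.add_comm]
      have main2 : ∀ x : X, S ((T ^ (n + 1)) x)
          = (T ^ n) x - ((((1 : M →L[ℂ] M) - S₀ ^ (n + 1) * T₀ ^ (n + 1)) (τ x) : M) : X) := by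
        intro x
        have e1 : S ((T ^ (n + 1)) x) = (((S₀ ^ (n + 1)) (τ ((T ^ (n + 1)) x)) : M) : X) := rfl
        rw [e1, hτT x]
        have e2 : (((1 : M →L[ℂ] M) - S₀ ^ (n + 1) * T₀ ^ (n + 1)) (τ x) : M)
            = τ x - (S₀ ^ (n + 1)) ((T₀ ^ (n + 1)) (τ x)) := rfl
        rw [e2, Submodule.coe_sub]
        have e3 : ((τ x : M) : X) = (T ^ n) x := rfl
        rw [e3]
        abel
      have hop : S * T ^ (n + 1) - T ^ n
          = -(ι.comp ((((1 : M →L[ℂ] M) - S₀ ^ (n + 1) * T₀ ^ (n + 1))).comp τ)) := by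
        ext x
        have e0 : (S * T ^ (n + 1) - T ^ n) x = S ((T ^ (n + 1)) x) - (T ^ n) x := rfl
        have e4 : (-(ι.comp ((((1 : M →L[ℂ] M) - S₀ ^ (n + 1) * T₀ ^ (n + 1))).comp τ))) x
            = -(((((1 : M →L[ℂ] M) - S₀ ^ (n + 1) * T₀ ^ (n + 1)) (τ x)) : M) : X) := rfl
        rw [e0, e4, main2 x]
        abel
      rw [hop]
      exact fr_neg _ (fr_comp _ _ (fr_comp' _ _ h2'))
    have q1 := (quot_eq_iff X _ _).mpr key1
    have q2 := (quot_eq_iff X _ _).mpr key2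
    have q1' : ((finiteRankIdeal X).ringCon.toQuotient T) ^ (n + 1)
        * (finiteRankIdeal X).ringCon.toQuotient S
        = ((finiteRankIdeal X).ringCon.toQuotient T) ^ n := by
      rw [← toQuotient_pow X T (n + 1), ← toQuotient_pow X T n, ← toQuotient_mul]
      exact q1
    have q2' : (finiteRankIdeal X).ringCon.toQuotient S
        * ((finiteRankIdeal X).ringCon.toQuotient T) ^ (n + 1)
        = ((finiteRankIdeal X).ringCon.toQuotient T) ^ n := by
      rw [← toQuotient_pow X T (n + 1), ← toQuotient_pow X T n, ← toQuotient_mul]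
      exact q2
    obtain ⟨b, hcomm, hbab, hpow⟩ :=
      drazin_core ((finiteRankIdeal X).ringCon.toQuotient T)
        ((finiteRankIdeal X).ringCon.toQuotient S)
        ((finiteRankIdeal X).ringCon.toQuotient S) n q2' q1'
    exact drazin_left_right _ b n hcomm hbab hpow
  · rintro ⟨hL, hR⟩
    obtain ⟨k, u, v, hu, hv⟩ := pireg_of_left_right _ hL hR
    obtain ⟨b, hcomm, hbab, hpow⟩ := drazin_core _ u v k hu hv
    obtain ⟨S, hS⟩ := toQuotient_surj X b
    set n := k + 1 with hndef
    have hmn : k ≤ n := by omega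
    have h1n : 1 ≤ n := by omega
    have hπS : ∀ m : ℕ, (finiteRankIdeal X).ringCon.toQuotient (S ^ m) = b ^ m := by
      intro m; rw [toQuotient_pow, hS]
    have hπT : ∀ m : ℕ, (finiteRankIdeal X).ringCon.toQuotient (T ^ m)
        = ((finiteRankIdeal X).ringCon.toQuotient T) ^ m := fun m => toQuotient_pow X T m
    have memFD : ∀ (U V : X →L[ℂ] X),
        (finiteRankIdeal X).ringCon.toQuotient U = (finiteRankIdeal X).ringCon.toQuotient V →
        FiniteDimensional ℂ (LinearMap.range (U - V).toLinearMap) :=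
      fun U V h => (quot_eq_iff X U V).mp h
    have mems : ∀ m : ℕ, k ≤ m → 1 ≤ m →
        FiniteDimensional ℂ (LinearMap.range (T ^ m * S ^ m * T ^ m - T ^ m).toLinearMap) ∧
        FiniteDimensional ℂ (LinearMap.range (S ^ m * T ^ m * S ^ m - S ^ m).toLinearMap) ∧
        FiniteDimensional ℂ (LinearMap.range (T ^ m * S ^ m - S ^ m * T ^ m).toLinearMap) := by
      intro m hkm h1m
      obtain ⟨I1, I2, I3, I4, I5⟩ :=
        ring_trio ((finiteRankIdeal X).ringCon.toQuotient T) b k hcomm hbab hpow m hkm h1m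
      refine ⟨memFD _ _ ?_, memFD _ _ ?_, memFD _ _ ?_⟩
      · rw [toQuotient_mul, toQuotient_mul, hπT m, hπS m]
        exact I1
      · rw [toQuotient_mul, toQuotient_mul, hπT m, hπS m]
        exact I2
      · rw [toQuotient_mul, toQuotient_mul, hπT m, hπS m]
        exact I3
    have hMclosed : IsClosed ((LinearMap.range (T ^ n).toLinearMap : Submodule ℂ X) : Set X) := by
      obtain ⟨m1, m2, m3⟩ := mems n hmn h1n
      exact isClosed_range_of_rel_regular (T ^ n) (S ^ n) m1 m2 m3
    have hM1closed : IsClosed ((LinearMap.range (T ^ (n + 1)).toLinearMap : Submodule ℂ X) : Set X) := by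
      obtain ⟨m1, m2, m3⟩ := mems (n + 1) (by omega) (by omega)
      exact isClosed_range_of_rel_regular (T ^ (n + 1)) (S ^ (n + 1)) m1 m2 m3
    obtain ⟨I1, I2, I3, I4, I5⟩ :=
      ring_trio ((finiteRankIdeal X).ringCon.toQuotient T) b k hcomm hbab hpow n hmn h1n
    refine ⟨n, hMclosed, ?_, ?_, ?_⟩
    · -- closed range of restriction
      have hseteq : ((LinearMap.range (clmRestrict T (LinearMap.range (T ^ n).toLinearMap)
            (range_pow_invariant T n)).toLinearMap : Submodule ℂ (LinearMap.range (T ^ n).toLinearMap)) :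
            Set (LinearMap.range (T ^ n).toLinearMap))
          = (Subtype.val) ⁻¹' ((LinearMap.range (T ^ (n + 1)).toLinearMap : Submodule ℂ X) : Set X) := by
        ext z
        simp only [Set.mem_preimage, SetLike.mem_coe]
        constructor
        · rintro ⟨w, rfl⟩
          obtain ⟨y, hy⟩ := w.2
          refine ⟨y, ?_⟩
          have e1 : ((clmRestrict T (LinearMap.range (T ^ n).toLinearMap) (range_pow_invariant T n) w
              : LinearMap.range (T ^ n).toLinearMap) : X) = T (w : X) := rfl
          rw [show (((clmRestrict T (LinearMap.range (T ^ n).toLinearMap) (range_pow_invariant T n)).toLinearMap w : LinearMap.range (T ^ n).toLinearMap) : X) = T (w : X) from e1, ← hy]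
          show (T ^ (n + 1)) y = T ((T ^ n) y)
          rw [pow_succ' T n]
          rfl
        · rintro ⟨y, hy⟩
          refine ⟨⟨(T ^ n) y, LinearMap.mem_range_self _ y⟩, ?_⟩
          apply Subtype.ext
          show T ((T ^ n) y) = (z : X)
          rw [← hy]
          show T ((T ^ n) y) = (T ^ (n + 1)) y
          rw [pow_succ' T n]
          rfl
      rw [hseteq]
      exact hM1closed.preimage continuous_subtype_val
    · -- finite-dimensional kernel
      have hGfd : FiniteDimensional ℂ (LinearMap.range (T ^ n - S ^ n * T ^ (n + n)).toLinearMap) := by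
        apply memFD
        rw [toQuotient_mul, hπT n, hπT (n + n), hπS n]
        exact I4.symm
      have hclaim : ∀ x : X, x ∈ LinearMap.range (T ^ n).toLinearMap → T x = 0 →
          x ∈ LinearMap.range (T ^ n - S ^ n * T ^ (n + n)).toLinearMap := by
        intro x hx hTx
        obtain ⟨y, hy⟩ := hx
        refine ⟨y, ?_⟩
        have e1 : (T ^ (n + n)) y = (T ^ (n - 1)) ((T ^ (n + 1)) y) := by
          rw [show n + n = (n - 1) + (n + 1) by omega, pow_add]
          rfl
        have e2 : (T ^ (n + 1)) y = 0 := by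
          have e3 : (T ^ (n + 1)) y = T ((T ^ n) y) := by rw [pow_succ' T n]; rfl
          rw [e3, show (T ^ n) y = x from hy, hTx]
        show (T ^ n) y - (S ^ n) ((T ^ (n + n)) y) = x
        rw [e1, e2, map_zero, map_zero, sub_zero, show (T ^ n) y = x from hy]
      haveI := hGfd
      set R := clmRestrict T (LinearMap.range (T ^ n).toLinearMap) (range_pow_invariant T n) with hRdef
      have hmem : ∀ z : ↥(LinearMap.ker R.toLinearMap),
          ((z : ↥(LinearMap.range (T ^ n).toLinearMap)) : X)
            ∈ LinearMap.range (T ^ n - S ^ n * T ^ (n + n)).toLinearMap := by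
        intro z
        apply hclaim _ (z : ↥(LinearMap.range (T ^ n).toLinearMap)).2
        have hz : R (z : ↥(LinearMap.range (T ^ n).toLinearMap)) = 0 := z.2
        have hz2 : ((R (z : ↥(LinearMap.range (T ^ n).toLinearMap)) : ↥(LinearMap.range (T ^ n).toLinearMap)) : X)
            = 0 := by rw [hz]; rfl
        exact hz2
      have hinjcomp : Function.Injective
          ((LinearMap.range (T ^ n).toLinearMap).subtype.comp (LinearMap.ker R.toLinearMap).subtype) :=
        (Submodule.injective_subtype _).comp (Submodule.injective_subtype _)
      have hinj : Function.Injective (LinearMap.codRestrict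
          (LinearMap.range (T ^ n - S ^ n * T ^ (n + n)).toLinearMap)
          ((LinearMap.range (T ^ n).toLinearMap).subtype.comp (LinearMap.ker R.toLinearMap).subtype) hmem) := by
        rw [← LinearMap.ker_eq_bot] at hinjcomp ⊢
        exact (LinearMap.ker_codRestrict _ _ _).trans hinjcomp
      exact FiniteDimensional.of_injective _ hinj
    · -- finite-dimensional cokernel
      set R := clmRestrict T (LinearMap.range (T ^ n).toLinearMap) (range_pow_invariant T n) with hRdef
      set F₂ : X →L[ℂ] X := T ^ n - T ^ (n + 1) * (T ^ (n - 1) * S ^ n) with hF₂def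
      have hF₂fd : FiniteDimensional ℂ (LinearMap.range F₂.toLinearMap) := by
        apply memFD
        rw [toQuotient_mul, toQuotient_mul, hπT (n + 1), hπT (n - 1), hπT n, hπS n]
        exact I5.symm
      set V' : Submodule ℂ ↥(LinearMap.range (T ^ n).toLinearMap) :=
        Submodule.comap (LinearMap.range (T ^ n).toLinearMap).subtype (LinearMap.range F₂.toLinearMap) with hV'def
      have hV'fd : FiniteDimensional ℂ V' := by
        haveI := hF₂fd
        have hinjcomp : Function.Injective
            ((LinearMap.range (T ^ n).toLinearMap).subtype.comp V'.subtype) :=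
          (Submodule.injective_subtype _).comp (Submodule.injective_subtype _)
        have hinj2 : Function.Injective (LinearMap.codRestrict (LinearMap.range F₂.toLinearMap)
            ((LinearMap.range (T ^ n).toLinearMap).subtype.comp V'.subtype) (fun z => z.2)) := by
          rw [← LinearMap.ker_eq_bot] at hinjcomp ⊢
          exact (LinearMap.ker_codRestrict _ _ _).trans hinjcomp
        exact FiniteDimensional.of_injective _ hinj2
      have hsup : ∀ z : ↥(LinearMap.range (T ^ n).toLinearMap), z ∈ LinearMap.range R.toLinearMap ⊔ V' := by
        intro z
        obtain ⟨x, hx⟩ := z.2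
        set u : X := (T ^ (n - 1) * S ^ n) x with hudef
        set m₁ : ↥(LinearMap.range (T ^ n).toLinearMap) := ⟨(T ^ n) u, LinearMap.mem_range_self _ u⟩
          with hm₁def
        have h6 : ((z - R m₁ : ↥(LinearMap.range (T ^ n).toLinearMap)) : X) = F₂ x := by
          have c1 : ((z - R m₁ : ↥(LinearMap.range (T ^ n).toLinearMap)) : X)
              = (z : X) - ((R m₁ : ↥(LinearMap.range (T ^ n).toLinearMap)) : X) := by rw [Submodule.coe_sub]
          have c2 : ((R m₁ : ↥(LinearMap.range (T ^ n).toLinearMap)) : X) = T ((T ^ n) u) := rfl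
          have c3 : F₂ x = (T ^ n) x - (T ^ (n + 1)) u := rfl
          have c4 : (T ^ (n + 1)) u = T ((T ^ n) u) := by rw [pow_succ' T n]; rfl
          rw [c1, c2, c3, c4, show (T ^ n) x = z from hx]
        have h7 : z - R m₁ ∈ V' := by
          show ((z - R m₁ : ↥(LinearMap.range (T ^ n).toLinearMap)) : X) ∈ LinearMap.range F₂.toLinearMap
          rw [h6]
          exact LinearMap.mem_range_self _ x
        have h8 : z = R m₁ + (z - R m₁) := by abel
        rw [h8]
        exact Submodule.add_mem_sup (LinearMap.mem_range_self R.toLinearMap m₁) h7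
      haveI := hV'fd
      have hsurj : Function.Surjective ((LinearMap.range R.toLinearMap).mkQ.comp V'.subtype) := by
        intro q
        obtain ⟨z, rfl⟩ := Submodule.mkQ_surjective _ q
        obtain ⟨r, hr, w, hw, hzz⟩ := Submodule.mem_sup.mp (hsup z)
        refine ⟨⟨w, hw⟩, ?_⟩
        show (LinearMap.range R.toLinearMap).mkQ w = (LinearMap.range R.toLinearMap).mkQ z
        rw [← hzz, map_add]
        have hr0 : (LinearMap.range R.toLinearMap).mkQ r = 0 := by
          rw [Submodule.mkQ_apply, Submodule.Quotient.mk_eq_zero]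
          exact hr
        rw [hr0, zero_add]
      exact Module.Finite.of_surjective _ hsurj
end
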